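/- arXiv:2509.20880 — 10 statements merged into one kernel-verified Lean document; each statement's English description precedes it below -/
import Mathlib

section
/- Suppose k ≥ 1 and mk > n. Then θ_{m,k} is the zero map, i.e., θ_{m,k}(x) = 0 for every x ∈ F_2^n. -/
/-- Index `i + j` computed modulo `n`, for `i : Fin n` and `j : ℕ`. -/
def idx {n : ℕ} (i : Fin n) (j : ℕ) : Fin n :=
  ⟨(i.val + j) % n, Nat.mod_lt _ i.pos⟩

/-- The map `θ_{m,k} : F_2^n → F_2^n`; `θ_{m,0}` is the identity map, and for `k ≥ 1`,
`(θ_{m,k}(x))_i = x_{i+mk} · ∏_{1 ≤ j ≤ mk−1, m ∤ j} (x_{i+j} + 1)` (indices mod `n`). -/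
def theta (n m k : ℕ) : (Fin n → ZMod 2) → Fin n → ZMod 2 :=
  if k = 0 then id
  else fun x i =>
    x (idx i (m * k)) *
      ∏ j ∈ (Finset.Ico 1 (m * k)).filter (fun j => ¬ m ∣ j), (x (idx i j) + 1)

theorem stmt0 (n m k : ℕ) (hn : 1 ≤ n) (hm : 2 ≤ m) (hmn : ¬ m ∣ n)
    (hk : 1 ≤ k) (hgt : m * k > n) :
    ∀ x : Fin n → ZMod 2, theta n m k x = 0 := by
  intro x
  funext i
  have hk0 : k ≠ 0 := by omega
  simp only [theta, if_neg hk0, Pi.zero_apply]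
  set j₀ : ℕ := m * k - n with hj₀
  have hmem : j₀ ∈ (Finset.Ico 1 (m * k)).filter (fun j => ¬ m ∣ j) := by
    refine Finset.mem_filter.mpr ⟨Finset.mem_Ico.mpr ⟨by omega, by omega⟩, ?_⟩
    intro hdvd
    exact hmn (by
      have : m * k - j₀ = n := by omega
      rw [← this]
      exact Nat.dvd_sub (Dvd.intro k rfl) hdvd)
  have hidx : idx i j₀ = idx i (m * k) := by
    have : i.val + m * k = i.val + j₀ + n := by omega
    simp only [idx, this, Nat.add_mod_right]
  rw [← Finset.mul_prod_erase _ _ hmem, hidx]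
  have hzero : ∀ a : ZMod 2, a * (a + 1) = 0 := by decide
  rw [← mul_assoc, hzero, zero_mul]
end

section
/- θ_{m,ℓ} is not the zero map, while θ_{m,ℓ+1} is the zero map; hence ℓ + 1 is the smallest positive integer k for which θ_{m,k} is the zero map. -/
lemma mul_self_add_one (a : ZMod 2) : a * (a + 1) = 0 := by revert a; decide

lemma theta_ne_zero (n m k : ℕ) (hn : 1 ≤ n) (h : m * k < n) :
    ∃ x : Fin n → ZMod 2, theta n m k x ≠ 0 := by
  set i0 : Fin n := ⟨0, hn⟩ with hi0
  set p : Fin n := ⟨m * k, h⟩ with hp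
  refine ⟨fun t => if t = p then 1 else 0, fun hz => ?_⟩
  have h0 : theta n m k (fun t => if t = p then 1 else 0) i0 = 0 := by
    rw [hz]; rfl
  rcases Nat.eq_zero_or_pos k with hk | hk
  · subst hk
    have h1 : (if i0 = p then (1:ZMod 2) else 0) = 0 := congrFun hz i0
    have he : i0 = p := by
      ext; simp [hi0, hp]
    rw [if_pos he] at h1
    exact one_ne_zero h1
  · have hk0 : k ≠ 0 := hk.ne'
    simp only [theta, if_neg hk0] at h0
    have hpe : idx i0 (m * k) = p := by
      ext
      simp [idx, hi0, hp, Nat.mod_eq_of_lt h]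
    rw [hpe, if_pos rfl] at h0
    have hprod : ∏ j ∈ (Finset.Ico 1 (m * k)).filter (fun j => ¬ m ∣ j),
        ((if idx i0 j = p then (1:ZMod 2) else 0) + 1) = 1 := by
      apply Finset.prod_eq_one
      intro j hj
      simp only [Finset.mem_filter, Finset.mem_Ico] at hj
      have hjn : j < n := lt_trans hj.1.2 h
      have hne : idx i0 j ≠ p := by
        apply Fin.ne_of_val_ne
        simp only [idx, hi0, hp, Nat.zero_add]
        have := Nat.mod_eq_of_lt hjn
        omega
      rw [if_neg hne]
      ring
    rw [hprod, one_mul] at h0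
    exact one_ne_zero h0

theorem stmt1 (n m : ℕ) (hn : 1 ≤ n) (hm : 2 ≤ m) (hmn : ¬ m ∣ n) :
    (∃ x : Fin n → ZMod 2, theta n m (n / m) x ≠ 0) ∧
    (∀ x : Fin n → ZMod 2, theta n m (n / m + 1) x = 0) ∧
    (∀ k : ℕ, 1 ≤ k → (∀ x : Fin n → ZMod 2, theta n m k x = 0) → n / m + 1 ≤ k) := by
  have hmpos : 0 < m := by omega
  have hle : m * (n / m) ≤ n := Nat.mul_div_le n m
  have hne : m * (n / m) ≠ n := fun h => hmn ⟨n / m, h.symm⟩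
  have hlt : m * (n / m) < n := lt_of_le_of_ne hle hne
  refine ⟨theta_ne_zero n m (n / m) hn hlt, ?_, ?_⟩
  · intro x
    funext i
    set k := n / m + 1 with hkdef
    have hk0 : k ≠ 0 := Nat.succ_ne_zero _
    have hgt : n < m * k := by
      have h1 : n / m < k := Nat.lt_succ_self _
      have h2 := (Nat.div_lt_iff_lt_mul hmpos).mp h1
      rw [Nat.mul_comm]
      exact h2
    set j0 := m * k - n with hj0def
    have hj1 : 1 ≤ j0 := by omega
    have hj2 : j0 < m * k := by omega
    have hmk : m * k = j0 + n := by omega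
    have hndvd : ¬ m ∣ j0 := by
      intro hd
      apply hmn
      have hsub : m * k - j0 = n := by omega
      exact hsub ▸ Nat.dvd_sub (Dvd.intro k rfl) hd
    have hmem : j0 ∈ (Finset.Ico 1 (m * k)).filter (fun j => ¬ m ∣ j) :=
      Finset.mem_filter.mpr ⟨Finset.mem_Ico.mpr ⟨hj1, hj2⟩, hndvd⟩
    have hidx : idx i (m * k) = idx i j0 := by
      ext
      simp only [idx]
      rw [hmk, ← Nat.add_assoc, Nat.add_mod_right]
    simp only [theta, if_neg hk0, Pi.zero_apply]
    rw [hidx, ← Finset.mul_prod_erase _ _ hmem, ← mul_assoc, mul_self_add_one, zero_mul]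
  · intro k hk hzero
    by_contra hcon
    push_neg at hcon
    have hkle : m * k < n := by
      have h2 : k ≤ n / m := by omega
      have h3 : m * k ≤ m * (n / m) := Nat.mul_le_mul le_rfl h2
      omega
    obtain ⟨x, hx⟩ := theta_ne_zero n m k hn hkle
    exact hx (hzero x)
end

section
/- For every k with 1 ≤ k ≤ ℓ, the algebraic degree of θ_{m,k} equals (m−1)k + 1. -/
/-- The algebraic degree of a Boolean function: the least `d` such that the function is the
evaluation of a multivariate polynomial over `F_2` of total degree at most `d`. -/
noncomputable def algDeg {N : ℕ} (h : (Fin N → ZMod 2) → ZMod 2) : ℕ :=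
  sInf {d | ∃ p : MvPolynomial (Fin N) (ZMod 2),
    p.totalDegree ≤ d ∧ ∀ x, MvPolynomial.eval x p = h x}

/-- The algebraic degree of a vectorial map: the maximum of the algebraic degrees of its
coordinate functions. -/
noncomputable def mapDeg {N : ℕ} (F : (Fin N → ZMod 2) → Fin N → ZMod 2) : ℕ :=
  Finset.univ.sup fun i => algDeg fun x => F x i

namespace Stmt2Aux

open Finset MvPolynomial

/-- indicator vector of a finset -/
def ind {n : ℕ} (T : Finset (Fin n)) : Fin n → ZMod 2 := fun i => if i ∈ T then 1 else 0

lemma idx_inj {n : ℕ} (i : Fin n) {j1 j2 : ℕ} (h1 : j1 < n) (h2 : j2 < n)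
    (h : idx i j1 = idx i j2) : j1 = j2 := by
  have h' : (i.val + j1) % n = (i.val + j2) % n := congrArg Fin.val h
  have h'' : j1 ≡ j2 [MOD n] := Nat.ModEq.add_left_cancel' i.val h'
  rwa [Nat.ModEq, Nat.mod_eq_of_lt h1, Nat.mod_eq_of_lt h2] at h'' 

lemma sum_pow_ind {n : ℕ} (S : Finset (Fin n)) (α : Fin n →₀ ℕ)
    (hcard : α.support.card < S.card) :
    ∑ T ∈ S.powerset, ∏ i ∈ α.support, (ind T i) ^ α i = 0 := by
  have hns : ¬ S ⊆ α.support := fun h => absurd (Finset.card_le_card h) (by omega)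
  obtain ⟨s, hsS, hsA⟩ := Finset.not_subset.mp hns
  refine Finset.sum_involution (fun T _ => if s ∈ T then T.erase s else insert s T)
    ?_ ?_ ?_ ?_
  · intro T hT
    have heq : ∀ i ∈ α.support,
        (ind (if s ∈ T then T.erase s else insert s T) i) ^ α i = (ind T i) ^ α i := by
      intro i hi
      have hne : i ≠ s := fun h => hsA (h ▸ hi)
      congr 1
      by_cases hsT : s ∈ T <;> simp [ind, hsT, Finset.mem_erase, Finset.mem_insert, hne]
    rw [Finset.prod_congr rfl heq]
    exact CharTwo.add_self_eq_zero _
  · intro T hT _ h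
    replace h : (if s ∈ T then T.erase s else insert s T) = T := h
    by_cases hsT : s ∈ T
    · rw [if_pos hsT] at h
      exact Finset.notMem_erase s T (by rw [h]; exact hsT)
    · rw [if_neg hsT] at h
      exact hsT (by rw [← h]; exact Finset.mem_insert_self s T)
  · intro T hT
    rw [Finset.mem_powerset] at hT ⊢
    show (if s ∈ T then T.erase s else insert s T) ⊆ S
    by_cases hsT : s ∈ T
    · rw [if_pos hsT]
      exact (Finset.erase_subset _ _).trans hT
    · rw [if_neg hsT]
      exact Finset.insert_subset hsS hT
  · intro T hT
    show (if s ∈ (if s ∈ T then T.erase s else insert s T)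
        then (if s ∈ T then T.erase s else insert s T).erase s
        else insert s (if s ∈ T then T.erase s else insert s T)) = T
    by_cases hsT : s ∈ T
    · rw [if_pos hsT, if_neg (Finset.notMem_erase s T)]
      exact Finset.insert_erase hsT
    · rw [if_neg hsT, if_pos (Finset.mem_insert_self s T)]
      exact Finset.erase_insert hsT

lemma sum_cube_eval {n : ℕ} (S : Finset (Fin n)) (p : MvPolynomial (Fin n) (ZMod 2))
    (hp : p.totalDegree < S.card) :
    ∑ T ∈ S.powerset, MvPolynomial.eval (ind T) p = 0 := by
  have h1 : ∀ T : Finset (Fin n), MvPolynomial.eval (ind T) p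
      = ∑ α ∈ p.support, coeff α p * ∏ i ∈ α.support, (ind T i) ^ α i :=
    fun T => eval_eq _ _
  simp_rw [h1]
  rw [Finset.sum_comm]
  refine Finset.sum_eq_zero fun α hα => ?_
  rw [← Finset.mul_sum, sum_pow_ind S α ?_, mul_zero]
  have h2 : α.support.card ≤ α.sum fun _ e => e := by
    rw [Finsupp.sum]
    calc α.support.card = ∑ _i ∈ α.support, 1 := by simp
    _ ≤ ∑ i ∈ α.support, α i :=
      Finset.sum_le_sum fun i hi => Nat.one_le_iff_ne_zero.mpr (Finsupp.mem_support_iff.mp hi)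
  have h3 := MvPolynomial.le_totalDegree hα
  omega

end Stmt2Aux

open Finset MvPolynomial Stmt2Aux

theorem stmt2 (n m k : ℕ) (hn : 1 ≤ n) (hm : 2 ≤ m) (hmn : ¬ m ∣ n)
    (hk1 : 1 ≤ k) (hk2 : k ≤ n / m) :
    mapDeg (theta n m k) = (m - 1) * k + 1 := by
  have hk0 : k ≠ 0 := by omega
  set D := (m - 1) * k + 1 with hD
  -- m*k < n
  have hmkn : m * k < n := by
    have h1 : m * k ≤ m * (n / m) := Nat.mul_le_mul_left m hk2
    have h2 : m * (n / m) ≤ n := by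
      rw [mul_comm]; exact Nat.div_mul_le_self n m
    have h3 : m * k ≠ n := fun h => hmn ⟨k, h.symm⟩
    omega
  set S0 : Finset ℕ := (Finset.Ico 1 (m * k)).filter (fun j => ¬ m ∣ j) with hS0
  have hj_lt : ∀ j ∈ S0, 1 ≤ j ∧ j < m * k := by
    intro j hj
    rw [hS0, Finset.mem_filter, Finset.mem_Ico] at hj
    exact ⟨hj.1.1, hj.1.2⟩
  -- cardinality of S0
  have hcardS0 : S0.card = (m - 1) * k := by
    have himg : (Finset.Ico 1 (m * k)).filter (fun j => m ∣ j)
        = (Finset.Ico 1 k).image (fun t => m * t) := by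
      ext j
      simp only [Finset.mem_filter, Finset.mem_Ico, Finset.mem_image]
      constructor
      · rintro ⟨⟨h1, h2⟩, t, rfl⟩
        refine ⟨t, ⟨?_, ?_⟩, rfl⟩ <;> nlinarith
      · rintro ⟨t, ⟨h1, h2⟩, rfl⟩
        exact ⟨⟨by nlinarith, by nlinarith⟩, ⟨t, rfl⟩⟩
    have hinj : Set.InjOn (fun t => m * t) ↑(Finset.Ico 1 k) := by
      intro a _ b _ h
      have : m * a = m * b := h
      exact Nat.eq_of_mul_eq_mul_left (by omega) this
    have hc1 : ((Finset.Ico 1 (m * k)).filter (fun j => m ∣ j)).card = k - 1 := by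
      rw [himg, Finset.card_image_of_injOn hinj, Nat.card_Ico]
    have hc2 := Finset.card_filter_add_card_filter_not
      (s := Finset.Ico 1 (m * k)) (p := fun j => m ∣ j)
    rw [Nat.card_Ico] at hc2
    have hmk : k ≤ m * k := Nat.le_mul_of_pos_left k (by omega)
    have hsub : (m - 1) * k = m * k - k := by
      rw [Nat.sub_mul, one_mul]
    rw [hc1] at hc2
    have h4 : m * k - 1 = (m - 1) * k + (k - 1) := by
      obtain ⟨m', rfl⟩ : ∃ m', m = m' + 1 := ⟨m - 1, by omega⟩
      obtain ⟨k', rfl⟩ : ∃ k', k = k' + 1 := ⟨k - 1, by omega⟩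
      rw [Nat.add_sub_cancel, Nat.add_sub_cancel]
      have h5 : (m' + 1) * (k' + 1) = m' * (k' + 1) + k' + 1 := by ring
      rw [h5, Nat.add_sub_cancel]
    rw [h4] at hc2
    rw [add_comm] at hc2
    exact Nat.add_right_cancel hc2
  -- unfolding theta
  have htheta : ∀ (x : Fin n → ZMod 2) (i : Fin n),
      theta n m k x i = x (idx i (m * k)) * ∏ j ∈ S0, (x (idx i j) + 1) := by
    intro x i
    rw [theta, if_neg hk0]
  -- per-coordinate degree
  have key : ∀ i : Fin n, algDeg (fun x => theta n m k x i) = D := by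
    intro i
    set a0 : Fin n := idx i (m * k) with ha0
    set S : Finset (Fin n) := insert a0 (S0.image (idx i)) with hS
    have hne : ∀ j ∈ S0, idx i j ≠ a0 := by
      intro j hj h
      have hlt := hj_lt j hj
      have := idx_inj i (lt_trans hlt.2 hmkn) hmkn h
      omega
    have hinjOn : Set.InjOn (idx i) ↑S0 := by
      intro a ha b hb h
      have ha' := hj_lt a ha
      have hb' := hj_lt b hb
      exact idx_inj i (lt_trans ha'.2 hmkn) (lt_trans hb'.2 hmkn) h
    have ha0nm : a0 ∉ S0.image (idx i) := by
      intro h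
      obtain ⟨j, hj, hj'⟩ := Finset.mem_image.mp h
      exact hne j hj hj'
    have hcardS : S.card = D := by
      rw [hS, Finset.card_insert_of_notMem ha0nm, Finset.card_image_of_injOn hinjOn,
        hcardS0, hD]
    -- the sum over the subcube equals 1
    have hsum1 : ∑ T ∈ S.powerset, theta n m k (ind T) i = 1 := by
      rw [Finset.sum_eq_single_of_mem ({a0} : Finset (Fin n))]
      · rw [htheta]
        have h1 : ind {a0} a0 = 1 := by simp [ind]
        have h2 : ∏ j ∈ S0, (ind ({a0} : Finset (Fin n)) (idx i j) + 1) = 1 := by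
          refine Finset.prod_eq_one fun j hj => ?_
          have : ind ({a0} : Finset (Fin n)) (idx i j) = 0 := by
            simp [ind, hne j hj]
          rw [this, zero_add]
        rw [h1, h2, one_mul]
      · rw [Finset.mem_powerset, Finset.singleton_subset_iff, hS]
        exact Finset.mem_insert_self _ _
      · intro T hTp hTne
        rw [htheta]
        by_cases ha : a0 ∈ T
        · have hex : ∃ t ∈ T, t ≠ a0 := by
            by_contra hcon
            push_neg at hcon
            exact hTne (Finset.eq_singleton_iff_unique_mem.mpr ⟨ha, hcon⟩)
          obtain ⟨t, htT, htne⟩ := hex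
          have htS : t ∈ S := (Finset.mem_powerset.mp hTp) htT
          rw [hS, Finset.mem_insert] at htS
          rcases htS with h | h
          · exact absurd h htne
          obtain ⟨j, hjS0, hj⟩ := Finset.mem_image.mp h
          refine mul_eq_zero_of_right _ (Finset.prod_eq_zero hjS0 ?_)
          have : ind T (idx i j) = 1 := by simp [ind, hj ▸ htT]
          rw [this]
          decide
        · have : ind T a0 = 0 := by simp [ind, ha]
          rw [this, zero_mul]
    -- the representing polynomial
    set p : MvPolynomial (Fin n) (ZMod 2) :=
      X a0 * ∏ j ∈ S0, (X (idx i j) + 1) with hp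
    have heval : ∀ x, MvPolynomial.eval x p = theta n m k x i := by
      intro x
      rw [htheta, hp, map_mul, eval_X, map_prod]
      simp
      exact Or.inl rfl
    have hdeg : p.totalDegree ≤ D := by
      calc p.totalDegree ≤ (X a0 : MvPolynomial (Fin n) (ZMod 2)).totalDegree
          + (∏ j ∈ S0, (X (idx i j) + 1 : MvPolynomial (Fin n) (ZMod 2))).totalDegree :=
            MvPolynomial.totalDegree_mul _ _
      _ ≤ 1 + S0.card := by
          refine add_le_add (le_of_eq (totalDegree_X _)) ?_
          calc (∏ j ∈ S0, (X (idx i j) + 1 : MvPolynomial (Fin n) (ZMod 2))).totalDegree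
              ≤ ∑ j ∈ S0, (X (idx i j) + 1 : MvPolynomial (Fin n) (ZMod 2)).totalDegree :=
                MvPolynomial.totalDegree_finset_prod _ _
          _ ≤ ∑ _j ∈ S0, 1 := by
              refine Finset.sum_le_sum fun j _ => ?_
              calc (X (idx i j) + 1 : MvPolynomial (Fin n) (ZMod 2)).totalDegree
                  ≤ max (X (idx i j) : MvPolynomial (Fin n) (ZMod 2)).totalDegree
                    (1 : MvPolynomial (Fin n) (ZMod 2)).totalDegree :=
                    MvPolynomial.totalDegree_add _ _
              _ ≤ 1 := by rw [totalDegree_X, totalDegree_one]; omega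
          _ = S0.card := by simp
      _ = D := by rw [hcardS0, hD]; omega
    have hDmem : D ∈ {d | ∃ q : MvPolynomial (Fin n) (ZMod 2),
        q.totalDegree ≤ d ∧ ∀ x, MvPolynomial.eval x q = theta n m k x i} := ⟨p, hdeg, heval⟩
    have hlb : ∀ d ∈ {d | ∃ q : MvPolynomial (Fin n) (ZMod 2),
        q.totalDegree ≤ d ∧ ∀ x, MvPolynomial.eval x q = theta n m k x i}, D ≤ d := by
      intro d hd
      by_contra hcon
      push_neg at hcon
      obtain ⟨q, hq1, hq2⟩ := hd
      have hq3 : q.totalDegree < S.card := by omega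
      have h0 := sum_cube_eval S q hq3
      rw [Finset.sum_congr rfl (fun T _ => hq2 (ind T)), hsum1] at h0
      exact one_ne_zero h0
    rw [algDeg]
    exact le_antisymm (Nat.sInf_le hDmem) (le_csInf ⟨D, hDmem⟩ hlb)
  rw [mapDeg]
  refine le_antisymm (Finset.sup_le fun i _ => (key i).le) ?_
  calc D = algDeg (fun x => theta n m k x ⟨0, hn⟩) := (key _).symm
  _ ≤ _ := Finset.le_sup (f := fun i : Fin n => algDeg fun x => theta n m k x i)
      (Finset.mem_univ (⟨0, hn⟩ : Fin n))
end

section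
/- The maps θ_{m,0}, θ_{m,1}, …, θ_{m,ℓ} are linearly independent over F_2 in the F_2-vector space of all maps F_2^n → F_2^n with pointwise addition; consequently the set Θ_{n,m} of all F_2-linear combinations Σ_{k=0}^{ℓ} a_k θ_{m,k} is an F_2-vector space of dimension ℓ + 1. -/
lemma theta_eval (n m : ℕ) (hn : 1 ≤ n) (hm : 2 ≤ m) (hmn : ¬ m ∣ n)
    (k t : ℕ) (hk : k ≤ n / m) (ht : t ≤ n / m) :
    theta n m k (fun j => if j.val = m * t then 1 else 0) ⟨0, hn⟩ =
      if k = t then 1 else 0 := by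
  have hm0 : 0 < m := by omega
  have hml : m * (n / m) < n := by
    have h1 : m * (n / m) ≤ n := by rw [mul_comm]; exact Nat.div_mul_le_self n m
    have h2 : m * (n / m) ≠ n := fun h => hmn ⟨n / m, h.symm⟩
    omega
  by_cases hk0 : k = 0
  · subst hk0
    have : (if (⟨0, hn⟩ : Fin n).val = m * t then (1 : ZMod 2) else 0)
        = if 0 = t then 1 else 0 := by
      simp only [Fin.val_mk]
      by_cases ht0 : t = 0
      · subst ht0; simp
      · have hmt : m * t ≠ 0 := Nat.mul_ne_zero (by omega) ht0
        rw [if_neg (fun h => hmt h.symm), if_neg (fun h => ht0 h.symm)]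
    simpa [theta] using this
  · rw [theta, if_neg hk0]
    have hmk : m * k < n := lt_of_le_of_lt (Nat.mul_le_mul_left m hk) hml
    have hprod : ∏ j ∈ (Finset.Ico 1 (m * k)).filter (fun j => ¬ m ∣ j),
        ((if (idx (⟨0, hn⟩ : Fin n) j).val = m * t then (1 : ZMod 2) else 0) + 1) = 1 := by
      apply Finset.prod_eq_one
      intro j hj
      simp only [Finset.mem_filter, Finset.mem_Ico] at hj
      have hjn : j < n := by omega
      have hidx : (idx (⟨0, hn⟩ : Fin n) j).val = j := by
        simp [idx, Nat.mod_eq_of_lt hjn]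
      rw [hidx, if_neg (fun h => hj.2 ⟨t, h⟩)]
      norm_num
    rw [hprod, mul_one]
    have hidx : (idx (⟨0, hn⟩ : Fin n) (m * k)).val = m * k := by
      simp [idx, Nat.mod_eq_of_lt hmk]
    simp only [hidx]
    by_cases hkt : k = t
    · subst hkt; simp
    · rw [if_neg (fun h => hkt (Nat.eq_of_mul_eq_mul_left hm0 h)), if_neg hkt]

theorem stmt3 (n m : ℕ) (hn : 1 ≤ n) (hm : 2 ≤ m) (hmn : ¬ m ∣ n) :
    LinearIndependent (ZMod 2) (fun k : Fin (n / m + 1) => theta n m k) ∧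
    Module.finrank (ZMod 2)
      (Submodule.span (ZMod 2)
        (Set.range (fun k : Fin (n / m + 1) => theta n m k))) = n / m + 1 := by
  have hli : LinearIndependent (ZMod 2) (fun k : Fin (n / m + 1) => theta n m k) := by
    rw [Fintype.linearIndependent_iff]
    intro g hg t
    have h := congrFun (congrFun hg (fun j => if j.val = m * t.val then 1 else 0)) ⟨0, hn⟩
    simp only [Finset.sum_apply, Pi.smul_apply, Pi.zero_apply, smul_eq_mul] at h
    have h2 : ∀ k : Fin (n / m + 1),
        theta n m k (fun j => if j.val = m * t.val then 1 else 0) ⟨0, hn⟩ =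
          if k = t then 1 else 0 := by
      intro k
      rw [theta_eval n m hn hm hmn k t (by omega) (by omega)]
      simp [Fin.val_eq_val]
    simp only [h2] at h
    simpa [mul_ite] using h
  refine ⟨hli, ?_⟩
  rw [finrank_span_eq_card hli, Fintype.card_fin]
end

section
/- Let t be a positive multiple of m, let k ≥ 0 and s ≥ 1, let a_0, …, a_k ∈ F_2 and b_1, …, b_s ∈ F_2, and set f = Σ_{i=0}^{k} a_i θ_{m,i} and g = θ_{m,0} + Σ_{j=1}^{s} b_j θ_{m,j}. Then (S^t ∘ f) ⊙ ⊙_{v=1}^{m−1} (S^{t−v} ∘ g + 1) = S^{t−m} ∘ (Σ_{i=0}^{k} a_i θ_{m,i+1}). -/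
lemma idx_idx {n : ℕ} (i : Fin n) (a b : ℕ) : idx (idx i a) b = idx i (a + b) := by
  simp [idx, Fin.ext_iff, Nat.mod_add_mod, Nat.add_assoc]

lemma idx_congr {n : ℕ} (i : Fin n) {a b : ℕ} (h : a = b) : idx i a = idx i b := by rw [h]

lemma zmul : ∀ a : ZMod 2, a * (a + 1) = 0 := by decide

lemma theta_zero (n m : ℕ) : theta n m 0 = id := if_pos rfl

lemma theta_eq {n m : ℕ} (k : ℕ) (hk : k ≠ 0) (x : Fin n → ZMod 2) (p : Fin n) :
    theta n m k x p = x (idx p (m*k)) *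
      ∏ j ∈ Finset.Ico 1 (m*k), (if m ∣ j then 1 else x (idx p j) + 1) := by
  rw [theta, if_neg hk]
  congr 1
  rw [Finset.prod_filter]
  exact Finset.prod_congr rfl (fun j _ => by by_cases h : m ∣ j <;> simp [h])

lemma key1 (a b c : ZMod 2) : a * (b * ((a+1) * c)) = 0 := by
  linear_combination b * c * zmul a

lemma key2 (a b c d : ZMod 2) : (a * b) * (c * ((a+1)*d)) = 0 := by
  linear_combination b * c * d * zmul a

lemma key3 (a b c d : ZMod 2) : (a * ((b+1)*c)) * (b*d) = 0 := by
  linear_combination a * c * d * zmul b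

lemma theta_mul_zero {n m : ℕ} (hm : 2 ≤ m) (x : Fin n → ZMod 2) (p : Fin n)
    (i' j v : ℕ) (hj : 1 ≤ j) (hv1 : 1 ≤ v) (hv2 : v < m) :
    theta n m i' x (idx p v) * theta n m j x p = 0 := by
  have hmv : ∀ w : ℕ, 1 ≤ w → w < m → ¬ m ∣ w := by
    intro w h1 h2 hd
    exact absurd (Nat.le_of_dvd (by omega) hd) (by omega)
  rcases Nat.eq_zero_or_pos i' with hi0 | hi0
  · subst hi0
    rw [theta_zero, id_eq, theta_eq j (by omega)]
    have hv_mem : v ∈ Finset.Ico 1 (m*j) := by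
      refine Finset.mem_Ico.mpr ⟨hv1, ?_⟩
      calc v < m := hv2
        _ ≤ m * j := Nat.le_mul_of_pos_right m hj
    rw [← Finset.mul_prod_erase _ _ hv_mem, if_neg (hmv v hv1 hv2)]
    exact key1 _ _ _
  · rcases le_or_gt (i' + 1) j with hij | hij
    · -- j ≥ i'+1, kill leading of θ_{i'} with factor (m*i'+v) of θ_j
      set w := m * i' + v with hw
      rw [theta_eq i' (by omega), theta_eq j (by omega)]
      have hw_mem : w ∈ Finset.Ico 1 (m*j) := by
        refine Finset.mem_Ico.mpr ⟨by omega, ?_⟩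
        have h2 : m * (i'+1) ≤ m * j := Nat.mul_le_mul_left m hij
        have h3 : m * (i'+1) = m * i' + m := by ring
        omega
      have hwd : ¬ m ∣ w := by
        intro hd
        have h1 : m ∣ m * i' := Dvd.intro i' rfl
        have : m ∣ v := (Nat.dvd_add_right h1).mp hd
        exact hmv v hv1 hv2 this
      rw [← Finset.mul_prod_erase _ _ hw_mem, if_neg hwd, idx_idx,
        show v + m * i' = w by omega]
      exact key2 _ _ _ _
    · -- j ≤ i', kill leading of θ_j with factor (m*j - v) of θ_{i'}
      set w := m * j - v with hw
      rw [theta_eq i' (by omega), theta_eq j (by omega)]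
      have hmj : m ≤ m * j := Nat.le_mul_of_pos_right m hj
      have hw_mem : w ∈ Finset.Ico 1 (m*i') := by
        refine Finset.mem_Ico.mpr ⟨by omega, ?_⟩
        have : m * j ≤ m * i' := Nat.mul_le_mul_left m (by omega)
        omega
      have hwd : ¬ m ∣ w := by
        intro hd
        have h1 : m ∣ m * j := Dvd.intro j rfl
        have h2 : m ∣ v := by
          have := Nat.dvd_sub h1 hd
          rwa [show m * j - w = v by omega] at this
        exact hmv v hv1 hv2 h2
      have hvw : v + w = m * j := by omega
      rw [← Finset.mul_prod_erase _ _ hw_mem, if_neg hwd, idx_idx, idx_idx, hvw]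
      exact key3 _ _ _ _

lemma theta_succ {n m : ℕ} (hm : 2 ≤ m) (x : Fin n → ZMod 2) (i : Fin n)
    (t : ℕ) (htm : m ≤ t) (i' : ℕ) :
    theta n m (i'+1) x (idx i (t - m)) =
      theta n m i' x (idx i t) * ∏ v ∈ Finset.Icc 1 (m-1), (x (idx i (t - v)) + 1) := by
  have hIcc : Finset.Icc 1 (m-1) = Finset.Ico 1 m := by
    rw [← Finset.Ico_add_one_right_eq_Icc]
    congr 1
    omega
  -- part 1: the low product over Ico 1 m
  have part1 : ∏ j ∈ Finset.Ico 1 m,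
      (if m ∣ j then 1 else x (idx (idx i (t-m)) j) + 1) =
      ∏ v ∈ Finset.Icc 1 (m-1), (x (idx i (t - v)) + 1) := by
    rw [hIcc]
    refine Finset.prod_nbij' (fun j => m - j) (fun j => m - j) ?_ ?_ ?_ ?_ ?_
    · intro j hj
      simp only [Finset.mem_Ico] at *
      omega
    · intro j hj
      simp only [Finset.mem_Ico] at *
      omega
    · intro j hj
      simp only [Finset.mem_Ico] at hj
      omega
    · intro j hj
      simp only [Finset.mem_Ico] at hj
      omega
    · intro j hj
      simp only [Finset.mem_Ico] at hj
      have hnd : ¬ m ∣ j := by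
        intro hd
        exact absurd (Nat.le_of_dvd (by omega) hd) (by omega)
      rw [if_neg hnd, idx_idx, idx_congr i (show t - m + j = t - (m - j) by omega)]
  rw [theta_eq (i'+1) (by omega)]
  have hsplit : ∏ j ∈ Finset.Ico 1 (m*(i'+1)),
      (if m ∣ j then 1 else x (idx (idx i (t-m)) j) + 1) =
      (∏ j ∈ Finset.Ico 1 m, (if m ∣ j then 1 else x (idx (idx i (t-m)) j) + 1)) *
      ∏ j ∈ Finset.Ico m (m*(i'+1)), (if m ∣ j then 1 else x (idx (idx i (t-m)) j) + 1) := by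
    rw [Finset.prod_Ico_consecutive _ (by omega) (by nlinarith)]
  have hlead : idx (idx i (t-m)) (m*(i'+1)) = idx (idx i t) (m*i') := by
    rw [idx_idx, idx_idx]
    refine idx_congr i ?_
    have h9 : m*(i'+1) = m*i' + m := by ring
    omega
  rcases Nat.eq_zero_or_pos i' with hi0 | hi0
  · subst hi0
    rw [theta_zero, id_eq]
    have h1 : m * (0+1) = m := by ring
    rw [h1] at hsplit ⊢
    have hix : idx (idx i (t-m)) m = idx i t := by
      rw [idx_idx]
      exact idx_congr i (by omega)
    rw [hsplit, Finset.Ico_self, Finset.prod_empty, mul_one, part1, hix]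
  · -- part 2: the high product equals θ_{i'}'s product
    have part2 : ∏ j ∈ Finset.Ico m (m*(i'+1)),
        (if m ∣ j then 1 else x (idx (idx i (t-m)) j) + 1) =
        ∏ l ∈ Finset.Ico 1 (m*i'), (if m ∣ l then 1 else x (idx (idx i t) l) + 1) := by
      rw [Finset.prod_Ico_eq_prod_range]
      have hd : m*(i'+1) - m = m*i' := by
        have : m*(i'+1) = m*i' + m := by ring
        omega
      rw [hd]
      have hstep : ∀ l, (if m ∣ (m + l) then 1 else x (idx (idx i (t-m)) (m+l)) + 1) =
          (if m ∣ l then (1 : ZMod 2) else x (idx (idx i t) l) + 1) := by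
        intro l
        have hdvd : m ∣ (m + l) ↔ m ∣ l := by
          constructor
          · intro h; have := Nat.dvd_sub h (dvd_refl m); simpa using this
          · intro h; exact Dvd.dvd.add (dvd_refl m) h
        by_cases h : m ∣ l
        · rw [if_pos (hdvd.mpr h), if_pos h]
        · rw [if_neg (fun hh => h (hdvd.mp hh)), if_neg h, idx_idx, idx_idx,
            idx_congr i (show t - m + (m + l) = t + l by omega)]
      calc ∏ l ∈ Finset.range (m*i'), (if m ∣ (m + l) then 1 else x (idx (idx i (t-m)) (m+l)) + 1)
          = ∏ l ∈ Finset.range (m*i'), (if m ∣ l then (1:ZMod 2) else x (idx (idx i t) l) + 1) :=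
            Finset.prod_congr rfl (fun l _ => hstep l)
        _ = ∏ l ∈ Finset.Ico 0 (m*i'), (if m ∣ l then (1:ZMod 2) else x (idx (idx i t) l) + 1) := by
            rw [Finset.range_eq_Ico]
        _ = ∏ l ∈ Finset.Ico 1 (m*i'), (if m ∣ l then (1:ZMod 2) else x (idx (idx i t) l) + 1) := by
            have hm1 : (1:ℕ) ≤ m*i' := by
              have := Nat.mul_pos (show 0 < m by omega) hi0
              omega
            rw [← Finset.prod_Ico_consecutive _ (Nat.zero_le 1) hm1]
            simp
    rw [theta_eq i' (by omega), hsplit, part1, part2, hlead]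
    ring

lemma prod_absorb (A : ZMod 2) (s : Finset ℕ) (p q : ℕ → ZMod 2)
    (h : ∀ v ∈ s, A * q v = 0) :
    A * ∏ v ∈ s, (p v + q v) = A * ∏ v ∈ s, p v := by
  classical
  induction s using Finset.induction_on with
  | empty => simp
  | insert _ _ hx ih =>
    rename_i c s'
    rw [Finset.prod_insert hx, Finset.prod_insert hx]
    have h1 := h c (Finset.mem_insert_self _ _)
    have h2 := ih (fun v hv => h v (Finset.mem_insert_of_mem hv))
    linear_combination (p c) * h2 + (∏ v ∈ s', (p v + q v)) * h1


/-- Lemma on `(S^t ∘ f) ⊙ ⊙_{v=1}^{m-1} (S^{t-v} ∘ g + 1)`, written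
coordinatewise: the `i`-th coordinate of `S^t ∘ f` is `f(x)_{i+t}` etc. -/
theorem stmt4 (n m : ℕ) (hn : 1 ≤ n) (hm : 2 ≤ m) (hmn : ¬ m ∣ n)
    (t : ℕ) (ht : 0 < t) (htm : m ∣ t) (k s : ℕ) (hs : 1 ≤ s)
    (a b : ℕ → ZMod 2) :
    (fun (x : Fin n → ZMod 2) (i : Fin n) =>
        (∑ i' ∈ Finset.range (k + 1), a i' • theta n m i') x (idx i t) *
          ∏ v ∈ Finset.Icc 1 (m - 1),
            ((theta n m 0 + ∑ j ∈ Finset.Icc 1 s, b j • theta n m j) x (idx i (t - v)) + 1)) =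
      fun (x : Fin n → ZMod 2) (i : Fin n) =>
        (∑ i' ∈ Finset.range (k + 1), a i' • theta n m (i' + 1)) x (idx i (t - m)) := by
  have htm' : m ≤ t := Nat.le_of_dvd ht htm
  funext x i
  simp only [Finset.sum_apply, Pi.add_apply, Pi.smul_apply, smul_eq_mul, theta_zero, id_eq]
  set A : ZMod 2 := ∑ i' ∈ Finset.range (k + 1), a i' * theta n m i' x (idx i t) with hA
  have hbody : ∀ v ∈ Finset.Icc 1 (m-1),
      (x (idx i (t - v)) + ∑ j ∈ Finset.Icc 1 s, b j * theta n m j x (idx i (t - v))) + 1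
      = (x (idx i (t - v)) + 1) + ∑ j ∈ Finset.Icc 1 s, b j * theta n m j x (idx i (t - v)) := by
    intro v _; ring
  rw [Finset.prod_congr rfl hbody]
  have hq : ∀ v ∈ Finset.Icc 1 (m-1),
      A * (∑ j ∈ Finset.Icc 1 s, b j * theta n m j x (idx i (t - v))) = 0 := by
    intro v hv
    simp only [Finset.mem_Icc] at hv
    rw [hA, Finset.sum_mul_sum]
    refine Finset.sum_eq_zero (fun i' _ => Finset.sum_eq_zero (fun j hj => ?_))
    simp only [Finset.mem_Icc] at hj
    have hidx : idx i t = idx (idx i (t - v)) v := by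
      rw [idx_idx]
      exact idx_congr i (by omega)
    have hz := theta_mul_zero hm x (idx i (t-v)) i' j v hj.1 hv.1 (by omega)
    rw [hidx] at *
    linear_combination (a i' * b j) * hz
  rw [prod_absorb A _ _ _ hq, hA, Finset.sum_mul]
  refine Finset.sum_congr rfl (fun i' _ => ?_)
  rw [mul_assoc, ← theta_succ hm x i t htm' i']
end

section
/- Let f = θ_{m,0} + Σ_{i=1}^{ℓ} a_i θ_{m,i} and g = θ_{m,0} + Σ_{j=1}^{ℓ} b_j θ_{m,j} with a_i, b_j ∈ F_2, and set a_0 = b_0 = 1. Then f ∘ g = Σ_{i=0}^{ℓ} Σ_{j=0}^{ℓ} a_i b_j θ_{m,i+j}, where θ_{m,s} denotes the zero map for s > ℓ; equivalently, f ∘ g = θ_{m,0} + Σ_{t=1}^{ℓ} c_t θ_{m,t} with c_t = Σ_{i+j=t, 0≤i,j} a_i b_j computed in F_2. In particular, f ∘ g ∈ G_{n,m}, so G_{n,m} is closed under composition and forms a monoid with neutral element θ_{m,0}. -/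
/-- The set `G_{n,m}` of maps `θ_{m,0} + Σ_{k=1}^{⌊n/m⌋} a_k • θ_{m,k}` with `a_k ∈ F_2`. -/
def Gset (n m : ℕ) : Set ((Fin n → ZMod 2) → Fin n → ZMod 2) :=
  { F | ∃ a : ℕ → ZMod 2,
      F = theta n m 0 + ∑ k ∈ Finset.Icc 1 (n / m), a k • theta n m k }

namespace S5
lemma zmul (z : ZMod 2) : z * (z + 1) = 0 := by revert z; decide

lemma idx_congr {n : ℕ} (i : Fin n) {s t : ℕ} (h : (i.val + s) % n = (i.val + t) % n) :
    idx i s = idx i t := by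
  unfold idx; exact Fin.ext h

lemma idx_idx {n : ℕ} (i : Fin n) (s t : ℕ) : idx (idx i s) t = idx i (s + t) := by
  unfold idx; apply Fin.ext
  show ((i.val + s) % n + t) % n = (i.val + (s + t)) % n
  rw [Nat.mod_add_mod, Nat.add_assoc]

/-- the index set of the product in `theta`. -/
def Sf (m k : ℕ) : Finset ℕ := (Finset.Ico 1 (m * k)).filter (fun j => ¬ m ∣ j)

lemma mem_Sf {m k j : ℕ} : j ∈ Sf m k ↔ (1 ≤ j ∧ j < m * k) ∧ ¬ m ∣ j := by
  simp [Sf, Finset.mem_filter, Finset.mem_Ico]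

lemma theta_eq {n m k : ℕ} (hk : k ≠ 0) (x : Fin n → ZMod 2) (i : Fin n) :
    theta n m k x i = x (idx i (m * k)) * ∏ j ∈ Sf m k, (x (idx i j) + 1) := by
  rw [theta, if_neg hk]; rfl

lemma theta_zero_eq (n m : ℕ) : theta n m 0 = id := by rw [theta, if_pos rfl]

/-- key collision lemma : a bare coordinate times a product containing the matching `x+1`
factor vanishes. -/
lemma collide {n : ℕ} (x : Fin n → ZMod 2) {S : Finset ℕ} {t0 : ℕ} (ht : t0 ∈ S)
    (q p : Fin n) (hp : idx q t0 = p) (u v : ZMod 2) :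
    (x p * u) * ((∏ t ∈ S, (x (idx q t) + 1)) * v) = 0 := by
  rw [← Finset.mul_prod_erase S _ ht, hp]
  linear_combination (u * (∏ t ∈ S.erase t0, (x (idx q t) + 1)) * v) * zmul (x p)







lemma prod_split {m : ℕ} (hm : 1 ≤ m) {a k : ℕ} (ha : 1 ≤ a) (hk : 1 ≤ k)
    (f : ℕ → ZMod 2) :
    ∏ j ∈ Sf m (a + k), f j = (∏ j ∈ Sf m a, f j) * ∏ t ∈ Sf m k, f (m * a + t) := by
  unfold Sf
  rw [Finset.prod_filter, Finset.prod_filter, Finset.prod_filter]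
  have h1 : 1 ≤ m * a := Nat.one_le_iff_ne_zero.2 (Nat.mul_ne_zero (by omega) (by omega))
  have h2 : m * a ≤ m * (a + k) := Nat.mul_le_mul_left m (Nat.le_add_right a k)
  rw [← Finset.prod_Ico_consecutive (fun j => if ¬ m ∣ j then f j else 1) h1 h2]
  congr 1
  have hexp : m * (a + k) = m * a + m * k := by ring
  have hmk : 1 ≤ m * k := Nat.one_le_iff_ne_zero.2 (Nat.mul_ne_zero (by omega) (by omega))
  have hlt : m * a < m * (a + k) := by omega
  rw [Finset.prod_eq_prod_Ico_succ_bot hlt]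
  have hma : ¬ ¬ m ∣ m * a := by simp
  rw [if_neg hma, one_mul]
  rw [Finset.prod_Ico_eq_prod_range, Finset.prod_Ico_eq_prod_range]
  have hd : m * (a + k) - (m * a + 1) = m * k - 1 := by omega
  rw [hd]
  apply Finset.prod_congr rfl
  intro r _
  have hdvd : m ∣ m * a + (1 + r) ↔ m ∣ 1 + r := Nat.dvd_add_right ⟨a, rfl⟩
  have harg : m * a + 1 + r = m * a + (1 + r) := by omega
  rw [harg]
  simp only [hdvd]








/-- `θ_{a+k}(x)_i = P_a(x,i) · θ_k(x)_{i+ma}` -/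
lemma thetaB {n m : ℕ} (hm : 1 ≤ m) {a : ℕ} (ha : 1 ≤ a) (k : ℕ)
    (x : Fin n → ZMod 2) (i : Fin n) :
    theta n m (a + k) x i
      = (∏ j ∈ Sf m a, (x (idx i j) + 1)) * theta n m k x (idx i (m * a)) := by
  rcases Nat.eq_zero_or_pos k with hk | hk
  · subst hk
    rw [theta_zero_eq, theta_eq (by omega) x i]
    simp [mul_comm]
  · rw [theta_eq (by omega) x i, theta_eq (by omega) x (idx i (m * a))]
    rw [prod_split hm ha hk (fun j => x (idx i j) + 1)]
    have hb : idx i (m * (a + k)) = idx (idx i (m * a)) (m * k) := by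
      rw [idx_idx]; congr 1; ring
    have hp : ∀ t, idx (idx i (m * a)) t = idx i (m * a + t) := fun t => idx_idx i (m*a) t
    simp only [hb, hp]
    ring

/-- `θ_s = 0` when `m s > n` (uses `m ∤ n`). -/
lemma theta_vanish {n m : ℕ} (hn : 1 ≤ n) (hmn : ¬ m ∣ n) {s : ℕ} (hs : n < m * s) :
    theta n m s = 0 := by
  have hs0 : s ≠ 0 := by rintro rfl; omega
  funext x i
  rw [theta_eq hs0 x i]
  have ht0 : m * s - n ∈ Sf m s := by
    rw [mem_Sf]
    refine ⟨⟨by omega, by omega⟩, fun hdvd => hmn ?_⟩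
    have : m ∣ m * s - (m * s - n) := Nat.dvd_sub ⟨s, rfl⟩ hdvd
    rwa [show m * s - (m * s - n) = n by omega] at this
  have hp : idx i (m * s - n) = idx i (m * s) := by
    apply idx_congr
    rw [show i.val + m * s = (i.val + (m * s - n)) + n by omega, Nat.add_mod_right]
  have h0 := collide x ht0 i (idx i (m * s)) hp 1 1
  show x (idx i (m * s)) * ∏ j ∈ Sf m s, (x (idx i j) + 1) = (0:ZMod 2)
  linear_combination h0









/-- Claim D: each correction term, multiplied by `y_{i+ma}` (expanded as a sum) and the
"larger" part of the product, vanishes. -/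
lemma claimD {n m : ℕ} (hm : 2 ≤ m) (b : ℕ → ZMod 2) (L : ℕ)
    (x : Fin n → ZMod 2) (i : Fin n) {a j k : ℕ} (ha : 1 ≤ a) (hj : j ∈ Sf m a)
    (hk : 1 ≤ k) :
    (∑ k' ∈ Finset.range (L + 1), b k' * theta n m k' x (idx i (m * a))) *
      (theta n m k x (idx i j) * ∏ j' ∈ (Sf m a).filter (fun j' => j < j'),
        (x (idx i j') + 1)) = 0 := by
  rw [mem_Sf] at hj
  obtain ⟨⟨hj1, hjlt⟩, hjd⟩ := hj
  have hmk1 : 1 ≤ m * k := Nat.one_le_iff_ne_zero.2 (Nat.mul_ne_zero (by omega) (by omega))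
  set c := j + m * k with hc
  have hcd : ¬ m ∣ c := by
    intro hdvd
    apply hjd
    have h2 : m ∣ c - m * k := Nat.dvd_sub hdvd (dvd_mul_right m k)
    rwa [show c - m * k = j by omega] at h2
  have hck : theta n m k x (idx i j)
      = x (idx i c) * ∏ t ∈ Sf m k, (x (idx i (j + t)) + 1) := by
    rw [theta_eq (by omega) x (idx i j)]
    simp only [idx_idx]
    rw [hc]
  rcases lt_trichotomy c (m * a) with hlt | heq | hgt
  · -- c < m*a : collision inside the outer product
    have hcS : c ∈ (Sf m a).filter (fun j' => j < j') := by
      rw [Finset.mem_filter, mem_Sf]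
      exact ⟨⟨⟨by omega, hlt⟩, hcd⟩, by omega⟩
    rw [hck]
    have h0 := collide x hcS i (idx i c) rfl
      ((∑ k' ∈ Finset.range (L + 1), b k' * theta n m k' x (idx i (m * a))) *
        ∏ t ∈ Sf m k, (x (idx i (j + t)) + 1)) 1
    linear_combination h0
  · exact absurd (heq ▸ dvd_mul_right m a) hcd
  · -- c > m*a : use the expansion of y at i+ma
    rw [Finset.sum_mul]
    apply Finset.sum_eq_zero
    intro k' _
    rcases Nat.eq_zero_or_pos k' with hk0 | hk1
    · -- bare x at i+ma collides with a factor of θ_k at t0 = m*a - j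
      subst hk0
      rw [theta_zero_eq]
      have ht0 : m * a - j ∈ Sf m k := by
        rw [mem_Sf]
        refine ⟨⟨by omega, by omega⟩, fun hdvd => hjd ?_⟩
        have h2 : m ∣ m * a - (m * a - j) := Nat.dvd_sub (dvd_mul_right m a) hdvd
        rwa [show m * a - (m * a - j) = j by omega] at h2
      have hp : idx (idx i j) (m * a - j) = idx i (m * a) := by
        rw [idx_idx]; congr 1; omega
      rw [hck]
      have h0 := collide x ht0 (idx i j) (idx i (m*a)) hp (b 0)
        (x (idx i c) * ∏ j' ∈ (Sf m a).filter (fun j' => j < j'), (x (idx i j') + 1))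
      show b 0 * id x (idx i (m*a)) * _ = (0:ZMod 2)
      simp only [id_eq, idx_idx] at h0 ⊢
      linear_combination h0
    · set c' := m * a + m * k' with hc'
      have hck' : theta n m k' x (idx i (m * a))
          = x (idx i c') * ∏ t ∈ Sf m k', (x (idx i (m * a + t)) + 1) := by
        rw [theta_eq (by omega) x (idx i (m * a))]
        simp only [idx_idx]
        rw [hc']
      have hc'd : m ∣ c' := Dvd.dvd.add (dvd_mul_right m a) (dvd_mul_right m k')
      rcases lt_trichotomy c' c with hlt' | heq' | hgt'
      · -- bare of θ_{k'} at c' collides with factor of θ_k at t0 = c' - j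
        have ht0 : c' - j ∈ Sf m k := by
          rw [mem_Sf]
          refine ⟨⟨by omega, by omega⟩, fun hdvd => hjd ?_⟩
          have h2 : m ∣ c' - (c' - j) := Nat.dvd_sub hc'd hdvd
          rwa [show c' - (c' - j) = j by omega] at h2
        have hp : idx (idx i j) (c' - j) = idx i c' := by
          rw [idx_idx]; congr 1; omega
        rw [hck, hck']
        have h0 := collide x ht0 (idx i j) (idx i c') hp
          (b k' * (∏ t ∈ Sf m k', (x (idx i (m * a + t)) + 1)) * x (idx i c))
          (∏ j' ∈ (Sf m a).filter (fun j' => j < j'), (x (idx i j') + 1))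
        simp only [idx_idx] at h0 ⊢
        linear_combination h0
      · exact absurd (heq' ▸ hc'd) hcd
      · -- bare of θ_k at c collides with factor of θ_{k'} at t0 = c - m*a
        have ht0 : c - m * a ∈ Sf m k' := by
          rw [mem_Sf]
          refine ⟨⟨by omega, by omega⟩, fun hdvd => hcd ?_⟩
          have h2 : m ∣ m * a + (c - m * a) := Dvd.dvd.add (dvd_mul_right m a) hdvd
          rwa [show m * a + (c - m * a) = c by omega] at h2
        have hp : idx (idx i (m * a)) (c - m * a) = idx i c := by
          rw [idx_idx]; congr 1; omega
        rw [hck, hck']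
        have h0 := collide x ht0 (idx i (m * a)) (idx i c) hp
          (b k' * x (idx i c') * ∏ t ∈ Sf m k, (x (idx i (j + t)) + 1))
          (∏ j' ∈ (Sf m a).filter (fun j' => j < j'), (x (idx i j') + 1))
        simp only [idx_idx] at h0 ⊢
        linear_combination h0







lemma telescope {R : Type*} [CommRing R] (g h : ℕ → R) (S : Finset ℕ) :
    ∀ Y : R, (∀ j ∈ S, Y * ((g j - h j) * ∏ j' ∈ S.filter (fun j' => j < j'), h j') = 0) →
      Y * ∏ j ∈ S, g j = Y * ∏ j ∈ S, h j := by
  induction S using Finset.induction_on_max with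
  | empty => simp
  | insert a s hmax ih =>
    intro Y H
    have hns : a ∉ s := fun hmem => lt_irrefl a (hmax a hmem)
    have hfa : (insert a s).filter (fun j' => a < j') = ∅ := by
      apply Finset.filter_eq_empty_iff.2
      intro j hjmem
      rcases Finset.mem_insert.1 hjmem with rfl | hjs
      · exact lt_irrefl _
      · exact not_lt_of_gt (hmax j hjs)
    have hYa : Y * g a = Y * h a := by
      have h1 := H a (Finset.mem_insert_self a s)
      rw [hfa] at h1
      simp only [Finset.prod_empty, mul_one] at h1
      linear_combination h1
    rw [Finset.prod_insert hns, Finset.prod_insert hns]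
    have h2 := ih (Y * h a) ?_
    · calc Y * (g a * ∏ j ∈ s, g j) = (Y * g a) * ∏ j ∈ s, g j := by ring
        _ = (Y * h a) * ∏ j ∈ s, g j := by rw [hYa]
        _ = (Y * h a) * ∏ j ∈ s, h j := h2
        _ = Y * (h a * ∏ j ∈ s, h j) := by ring
    · intro j hjs
      have h3 := H j (Finset.mem_insert_of_mem hjs)
      have hfs : (insert a s).filter (fun j' => j < j') =
          insert a (s.filter (fun j' => j < j')) := by
        rw [Finset.filter_insert, if_pos (hmax j hjs)]
      rw [hfs, Finset.prod_insert (fun hmem => hns (Finset.filter_subset _ s hmem))] at h3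
      linear_combination h3











/-- Key Lemma: composing `θ_a` with a `G`-style sum shifts indices. -/
lemma KL {n m : ℕ} (hm : 2 ≤ m) (L : ℕ) (b : ℕ → ZMod 2) (hb0 : b 0 = 1)
    (x : Fin n → ZMod 2) (a : ℕ) (i : Fin n) :
    theta n m a (fun p => ∑ k ∈ Finset.range (L + 1), b k * theta n m k x p) i
      = ∑ k ∈ Finset.range (L + 1), b k * theta n m (a + k) x i := by
  by_cases ha : a = 0
  · subst ha
    rw [theta_zero_eq]
    simp
  · have ha1 : 1 ≤ a := by omega
    set y : Fin n → ZMod 2 :=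
      (fun p => ∑ k ∈ Finset.range (L + 1), b k * theta n m k x p) with hy
    have hyp : ∀ p : Fin n, y p = x p + ∑ k ∈ Finset.Ico 1 (L + 1), b k * theta n m k x p := by
      intro p
      rw [hy]
      show ∑ k ∈ Finset.range (L + 1), b k * theta n m k x p = _
      rw [Finset.range_eq_Ico, Finset.sum_eq_sum_Ico_succ_bot (by omega)]
      rw [hb0, theta_zero_eq, one_mul]
      rfl
    rw [theta_eq ha y i]
    have htel := telescope (fun j => y (idx i j) + 1) (fun j => x (idx i j) + 1)
      (Sf m a) (y (idx i (m * a))) ?_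
    · rw [htel]
      have hYsum : y (idx i (m * a))
          = ∑ k ∈ Finset.range (L + 1), b k * theta n m k x (idx i (m * a)) := rfl
      rw [hYsum, Finset.sum_mul]
      apply Finset.sum_congr rfl
      intro k _
      rw [thetaB (by omega) ha1 k x i]
      ring
    · intro j hj
      have hdiff : (fun j => y (idx i j) + 1) j - (fun j => x (idx i j) + 1) j
          = ∑ k ∈ Finset.Ico 1 (L + 1), b k * theta n m k x (idx i j) := by
        simp only [hyp (idx i j)]
        ring
      rw [hdiff]
      obtain ⟨Y, hYv⟩ : ∃ Y : ZMod 2, Y = y (idx i (m * a)) := ⟨_, rfl⟩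
      rw [← hYv, Finset.sum_mul, Finset.mul_sum]
      apply Finset.sum_eq_zero
      intro k hk
      have hk1 : 1 ≤ k := (Finset.mem_Ico.1 hk).1
      have h0 := claimD hm b L x i ha1 hj hk1
      have hYv2 : Y = ∑ k' ∈ Finset.range (L + 1), b k' * theta n m k' x (idx i (m * a)) := hYv
      rw [hYv2]
      linear_combination b k * h0


lemma comp_eq {n m : ℕ} (hm : 2 ≤ m) (L : ℕ) (a b : ℕ → ZMod 2) (hb0 : b 0 = 1) :
    ((∑ i ∈ Finset.range (L + 1), a i • theta n m i) ∘
        (∑ j ∈ Finset.range (L + 1), b j • theta n m j)) =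
      (∑ i ∈ Finset.range (L + 1), ∑ j ∈ Finset.range (L + 1),
        (a i * b j) • theta n m (i + j)) := by
  funext x i0
  have hG : (∑ j ∈ Finset.range (L + 1), b j • theta n m j) x
      = fun p => ∑ j ∈ Finset.range (L + 1), b j * theta n m j x p := by
    funext p
    simp [Finset.sum_apply, Pi.smul_apply, smul_eq_mul]
  show (∑ i ∈ Finset.range (L + 1), a i • theta n m i)
      ((∑ j ∈ Finset.range (L + 1), b j • theta n m j) x) i0 = _
  rw [hG]
  simp only [Finset.sum_apply, Pi.smul_apply, smul_eq_mul]
  apply Finset.sum_congr rfl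
  intro i _
  rw [KL hm L b hb0 x i i0, Finset.mul_sum]
  apply Finset.sum_congr rfl
  intro j _
  ring

lemma range_insert (L : ℕ) : Finset.range (L + 1) = insert 0 (Finset.Icc 1 L) := by
  ext t
  simp [Finset.mem_range, Finset.mem_insert, Finset.mem_Icc]
  omega

lemma gset_form {n m : ℕ} {F : (Fin n → ZMod 2) → Fin n → ZMod 2} (hF : F ∈ Gset n m) :
    ∃ a : ℕ → ZMod 2, a 0 = 1 ∧
      F = ∑ k ∈ Finset.range (n / m + 1), a k • theta n m k := by
  obtain ⟨a, ha⟩ := hF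
  refine ⟨fun k => if k = 0 then 1 else a k, by simp, ?_⟩
  rw [ha, range_insert, Finset.sum_insert (by simp)]
  congr 1
  · simp
  apply Finset.sum_congr rfl
  intro k hk
  have : k ≠ 0 := by
    have := (Finset.mem_Icc.1 hk).1; omega
  beta_reduce
  rw [if_neg this]

lemma form_gset {n m : ℕ} (c : ℕ → ZMod 2) (hc0 : c 0 = 1) :
    (∑ k ∈ Finset.range (n / m + 1), c k • theta n m k) ∈ Gset n m := by
  refine ⟨c, ?_⟩
  rw [range_insert, Finset.sum_insert (by simp), hc0, one_smul]













lemma reshuffle {n m : ℕ} (hn : 1 ≤ n) (hm : 2 ≤ m) (hmn : ¬ m ∣ n) (a b : ℕ → ZMod 2) :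
    (∑ t ∈ Finset.range (n / m + 1),
        (∑ i ∈ Finset.range (n / m + 1), ∑ j ∈ Finset.range (n / m + 1),
          if i + j = t then a i * b j else 0) • theta n m t) =
    (∑ i ∈ Finset.range (n / m + 1), ∑ j ∈ Finset.range (n / m + 1),
        (a i * b j) • theta n m (i + j)) := by
  set L := n / m with hL
  funext x i0
  simp only [Finset.sum_apply, Pi.smul_apply, smul_eq_mul, Finset.sum_mul, ite_mul, zero_mul]
  rw [Finset.sum_comm]
  apply Finset.sum_congr rfl
  intro i _
  rw [Finset.sum_comm]
  apply Finset.sum_congr rfl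
  intro j _
  rw [Finset.sum_ite_eq (Finset.range (L + 1)) (i + j)
    (fun t => a i * b j * theta n m t x i0)]
  by_cases hin : i + j ∈ Finset.range (L + 1)
  · rw [if_pos hin]
  · rw [if_neg hin]
    have hvan : theta n m (i + j) = 0 := by
      apply theta_vanish hn hmn
      have h1 : L + 1 ≤ i + j := by
        simp only [Finset.mem_range, not_lt] at hin
        omega
      have h2 : m * (L + 1) ≤ m * (i + j) := Nat.mul_le_mul_left m h1
      have h3 := Nat.div_add_mod n m
      have h4 : n % m < m := Nat.mod_lt n (by omega)
      have h5 : m * (L + 1) = m * (n / m) + m := by rw [hL]; ring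
      omega
    rw [hvan]
    simp

lemma coef_zero {L : ℕ} (a b : ℕ → ZMod 2) (ha0 : a 0 = 1) (hb0 : b 0 = 1) :
    (∑ i ∈ Finset.range (L + 1), ∑ j ∈ Finset.range (L + 1),
      if i + j = 0 then a i * b j else 0) = 1 := by
  rw [Finset.sum_eq_single 0]
  · rw [Finset.sum_eq_single 0]
    · simp [ha0, hb0]
    · intro j _ hj; rw [if_neg (by omega)]
    · intro h; exact absurd (Finset.mem_range.2 (by omega)) h
  · intro i _ hi
    apply Finset.sum_eq_zero
    intro j _
    rw [if_neg (by omega)]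
  · intro h; exact absurd (Finset.mem_range.2 (by omega)) h



end S5
open S5

theorem stmt5 (n m : ℕ) (hn : 1 ≤ n) (hm : 2 ≤ m) (hmn : ¬ m ∣ n)
    (a b : ℕ → ZMod 2) (ha0 : a 0 = 1) (hb0 : b 0 = 1) :
    ((∑ i ∈ Finset.range (n / m + 1), a i • theta n m i) ∘
        (∑ j ∈ Finset.range (n / m + 1), b j • theta n m j)) =
      (∑ i ∈ Finset.range (n / m + 1), ∑ j ∈ Finset.range (n / m + 1),
        (a i * b j) • theta n m (i + j)) ∧
    (∀ f ∈ Gset n m, ∀ g ∈ Gset n m, f ∘ g ∈ Gset n m) ∧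
    theta n m 0 ∈ Gset n m ∧
    (∀ f ∈ Gset n m, f ∘ theta n m 0 = f ∧ theta n m 0 ∘ f = f) := by
  refine ⟨comp_eq hm (n / m) a b hb0, ?_, ?_, ?_⟩
  · intro f hf g hg
    obtain ⟨a', ha'0, rfl⟩ := gset_form hf
    obtain ⟨b', hb'0, rfl⟩ := gset_form hg
    rw [comp_eq hm (n / m) a' b' hb'0, ← reshuffle hn hm hmn a' b']
    exact form_gset _ (coef_zero a' b' ha'0 hb'0)
  · exact ⟨0, by simp⟩
  · intro f _
    rw [theta_zero_eq]
    exact ⟨Function.comp_id f, Function.id_comp f⟩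
end

section
/- G_{n,m} under composition forms an abelian group, and the map φ sending θ_{m,0} + Σ_{k=1}^{ℓ} a_k θ_{m,k} to the residue class of 1 + Σ_{k=1}^{ℓ} a_k z^k in F_2[z]/(z^{ℓ+1}) is a group isomorphism from (G_{n,m}, ∘) onto the unit group (F_2[z]/(z^{ℓ+1}))^*; in particular φ(f ∘ g) = φ(f)·φ(g) for all f, g ∈ G_{n,m}, and φ is a bijection from G_{n,m} onto the unit group. -/
namespace Stmt8Aux

lemma zmod2_mul_add_one (u : ZMod 2) : u * (u + 1) = 0 := by revert u; decide

/-- tail product with absolute-offset divisibility test -/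
def Ee (m : ℕ) (X : ℕ → ZMod 2) (a c : ℕ) : ZMod 2 :=
  ∏ t ∈ Finset.Ico a c, (if m ∣ t then 1 else X t + 1)

/-- `θ_k` at shifted base `s`, relative-offset divisibility test -/
def Tt (m : ℕ) (X : ℕ → ZMod 2) (k s : ℕ) : ZMod 2 :=
  X (s + m * k) * ∏ p ∈ Finset.Ico 1 (m * k), (if m ∣ p then 1 else X (s + p) + 1)

lemma Ee_mul (m : ℕ) (X : ℕ → ZMod 2) {a b c : ℕ} (hab : a ≤ b) (hbc : b ≤ c) :
    Ee m X a b * Ee m X b c = Ee m X a c :=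
  Finset.prod_Ico_consecutive _ hab hbc

lemma Ee_succ_dvd (m : ℕ) (X : ℕ → ZMod 2) {s c : ℕ} (hms : m ∣ s) (hsc : s < c) :
    Ee m X s c = Ee m X (s+1) c := by
  rw [Ee, Finset.prod_eq_prod_Ico_succ_bot hsc, if_pos hms, one_mul]; rfl

lemma Ee_succ_ndvd (m : ℕ) (X : ℕ → ZMod 2) {s c : ℕ} (hms : ¬ m ∣ s) (hsc : s < c) :
    Ee m X s c = (X s + 1) * Ee m X (s+1) c := by
  rw [Ee, Finset.prod_eq_prod_Ico_succ_bot hsc, if_neg hms]; rfl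

/-- the key vanishing lemma -/
lemma vanish (m : ℕ) (X : ℕ → ZMod 2) {k s c : ℕ} (hk : 1 ≤ k) (hmm : 1 ≤ m)
    (hs : ¬ m ∣ s) (hc : m ∣ c) (hsc : s < c) :
    X c * Ee m X (s+1) c * Tt m X k s = 0 := by
  have hmk : 1 ≤ m * k := Nat.one_le_iff_ne_zero.mpr (by positivity)
  set q := s + m * k with hq
  have hqd : ¬ m ∣ q := by
    intro h
    exact hs (by simpa [hq] using Nat.dvd_sub h (Dvd.intro k rfl))
  have hqc : q ≠ c := fun h => hqd (h ▸ hc)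
  rcases lt_or_gt_of_ne hqc with h1 | h2
  · -- q < c : the factor (X q + 1) occurs in Ee (s+1) c
    have e1 : Ee m X (s+1) c = Ee m X (s+1) q * ((X q + 1) * Ee m X (q+1) c) := by
      rw [← Ee_mul m X (show s+1 ≤ q by omega) (le_of_lt h1)]
      congr 1
      rw [Ee, Finset.prod_eq_prod_Ico_succ_bot h1, if_neg hqd]; rfl
    rw [e1, Tt]
    have key : X q * (X q + 1) = 0 := zmod2_mul_add_one _
    calc X c * (Ee m X (s+1) q * ((X q + 1) * Ee m X (q+1) c)) *
          (X (s + m*k) * ∏ p ∈ Finset.Ico 1 (m*k), (if m ∣ p then 1 else X (s + p) + 1))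
        = (X q * (X q + 1)) * (X c * Ee m X (s+1) q * Ee m X (q+1) c *
            ∏ p ∈ Finset.Ico 1 (m*k), (if m ∣ p then 1 else X (s + p) + 1)) := by
          rw [← hq]; ring
      _ = 0 := by rw [key]; ring
  · -- c < q : the factor (X c + 1) occurs in Tt k s
    have hp0 : 1 ≤ c - s := by omega
    have hp0' : c - s < m * k := by omega
    have hdp0 : ¬ m ∣ (c - s) := by
      intro h
      have : m ∣ s := by
        have := Nat.dvd_sub hc h
        simpa [Nat.sub_sub_self (le_of_lt hsc)] using this
      exact hs this
    have e2 : (∏ p ∈ Finset.Ico 1 (m*k), (if m ∣ p then 1 else X (s + p) + 1))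
        = (∏ p ∈ Finset.Ico 1 (c-s), (if m ∣ p then 1 else X (s + p) + 1)) *
          ((X c + 1) * ∏ p ∈ Finset.Ico (c-s+1) (m*k), (if m ∣ p then 1 else X (s + p) + 1)) := by
      rw [← Finset.prod_Ico_consecutive _ hp0 (le_of_lt hp0'),
        Finset.prod_eq_prod_Ico_succ_bot hp0', if_neg hdp0,
        Nat.add_sub_cancel' (le_of_lt hsc)]
    rw [Tt, e2]
    have key : X c * (X c + 1) = 0 := zmod2_mul_add_one _
    calc X c * Ee m X (s+1) c *
          (X (s + m*k) * ((∏ p ∈ Finset.Ico 1 (c-s), (if m ∣ p then 1 else X (s + p) + 1)) *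
            ((X c + 1) * ∏ p ∈ Finset.Ico (c-s+1) (m*k), (if m ∣ p then 1 else X (s + p) + 1))))
        = (X c * (X c + 1)) * (Ee m X (s+1) c * X (s + m*k) *
            (∏ p ∈ Finset.Ico 1 (c-s), (if m ∣ p then 1 else X (s + p) + 1)) *
            ∏ p ∈ Finset.Ico (c-s+1) (m*k), (if m ∣ p then 1 else X (s + p) + 1)) := by ring
      _ = 0 := by rw [key]; ring

lemma shiftT (m : ℕ) (X : ℕ → ZMod 2) {k s : ℕ} (hmk : 0 < m * k) (hs : m ∣ s) :
    Tt m X k s = X (s + m * k) * Ee m X s (s + m * k) := by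
  rw [Tt, Ee]
  congr 1
  have h2 : ∀ i, (if m ∣ (s + i) then (1:ZMod 2) else X (s+i) + 1)
      = (if m ∣ i then 1 else X (s+i) + 1) := by
    intro i
    by_cases h : m ∣ i
    · rw [if_pos h, if_pos ((Nat.dvd_add_right hs).mpr h)]
    · rw [if_neg h, if_neg (fun hh => h ((Nat.dvd_add_right hs).mp hh))]
  have hr : (∏ t ∈ Finset.Ico s (s + m*k), (if m ∣ t then (1:ZMod 2) else X t + 1))
      = ∏ p ∈ Finset.range (m*k), (if m ∣ p then 1 else X (s + p) + 1) := by
    rw [Finset.prod_Ico_eq_prod_range]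
    have h1 : s + m * k - s = m * k := by omega
    rw [h1]
    exact Finset.prod_congr rfl (fun p _ => h2 p)
  rw [hr, Finset.range_eq_Ico, Finset.prod_eq_prod_Ico_succ_bot hmk,
    if_pos (Nat.dvd_zero m), one_mul]


section CoreAux

variable (m : ℕ) (X : ℕ → ZMod 2) (S : Finset ℕ) (b : ℕ → ZMod 2)

/-- the image coordinate function -/
def Yy : ℕ → ZMod 2 := fun s => X s + ∑ k ∈ S, b k * Tt m X k s

lemma core_aux (hm : 1 ≤ m) (hS : ∀ k ∈ S, 1 ≤ k) (j : ℕ) :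
    ∀ d s, s + d = m * j → 1 ≤ s →
    Yy m X S b (m*j) * ∏ t ∈ Finset.Ico s (m*j), (if m ∣ t then 1 else Yy m X S b t + 1)
      = X (m*j) * Ee m X s (m*j)
        + ∑ k ∈ S, b k * (X (m*j + m*k) * Ee m X s (m*j + m*k)) := by
  intro d
  induction d with
  | zero =>
    intro s hs _
    have hs' : s = m * j := by omega
    subst hs'
    rw [Finset.Ico_self, Finset.prod_empty, mul_one, Yy, Ee, Finset.Ico_self,
      Finset.prod_empty, mul_one]
    congr 1
    refine Finset.sum_congr rfl ?_
    intro k hk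
    have hk1 : 1 ≤ k := hS k hk
    have hmk : 0 < m * k := by positivity
    rw [shiftT m X hmk (Dvd.intro j rfl)]
  | succ d ih =>
    intro s hs hs1
    have hslt : s < m * j := by omega
    have IH := ih (s+1) (by omega) (by omega)
    rw [Finset.prod_eq_prod_Ico_succ_bot hslt, ← mul_assoc,
      mul_comm (Yy m X S b (m*j)) _, mul_assoc, IH]
    by_cases hms : m ∣ s
    · rw [if_pos hms, one_mul]
      rw [Ee_succ_dvd m X hms hslt]
      congr 1
      refine Finset.sum_congr rfl (fun k _ => ?_)
      rw [Ee_succ_dvd m X hms (by omega : s < m*j + m*k)]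
    · rw [if_neg hms]
      have hY : Yy m X S b s + 1 = (X s + 1) + ∑ k ∈ S, b k * Tt m X k s := by
        rw [Yy]; ring
      rw [hY, add_mul]
      have hzero : (∑ k ∈ S, b k * Tt m X k s) *
          (X (m*j) * Ee m X (s+1) (m*j)
            + ∑ k ∈ S, b k * (X (m*j + m*k) * Ee m X (s+1) (m*j + m*k))) = 0 := by
        rw [Finset.sum_mul]
        refine Finset.sum_eq_zero (fun k hk => ?_)
        have hk1 : 1 ≤ k := hS k hk
        rw [mul_add]
        have h1 : b k * Tt m X k s * (X (m*j) * Ee m X (s+1) (m*j)) = 0 := by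
          have hv := vanish m X hk1 hm hms (Dvd.intro j rfl) hslt
          calc b k * Tt m X k s * (X (m*j) * Ee m X (s+1) (m*j))
              = b k * (X (m*j) * Ee m X (s+1) (m*j) * Tt m X k s) := by ring
            _ = 0 := by rw [hv]; ring
        have h2 : b k * Tt m X k s *
            (∑ k' ∈ S, b k' * (X (m*j + m*k') * Ee m X (s+1) (m*j + m*k'))) = 0 := by
          rw [Finset.mul_sum]
          refine Finset.sum_eq_zero (fun k' hk' => ?_)
          have hv := vanish m X hk1 hm hms
            (show m ∣ m*j + m*k' from Dvd.dvd.add (Dvd.intro j rfl) (Dvd.intro k' rfl))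
            (show s < m*j + m*k' by omega)
          calc b k * Tt m X k s * (b k' * (X (m*j + m*k') * Ee m X (s+1) (m*j + m*k')))
              = b k * b k' * (X (m*j + m*k') * Ee m X (s+1) (m*j + m*k') * Tt m X k s) := by
                ring
            _ = 0 := by rw [hv]; ring
        rw [h1, h2, add_zero]
      rw [hzero, add_zero]
      rw [Ee_succ_ndvd m X hms hslt, mul_add]
      congr 1
      · ring
      rw [Finset.mul_sum]
      refine Finset.sum_congr rfl (fun k _ => ?_)
      rw [Ee_succ_ndvd m X hms (show s < m*j + m*k by omega)]
      ring

end CoreAux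


lemma idx_idx {n : ℕ} (i : Fin n) (s t : ℕ) : idx (idx i s) t = idx i (s + t) := by
  unfold idx
  ext
  show ((i.val + s) % n + t) % n = (i.val + (s + t)) % n
  rw [Nat.mod_add_mod, Nat.add_assoc]

lemma prod_filter_ite {m a c : ℕ} (f : ℕ → ZMod 2) :
    ∏ t ∈ (Finset.Ico a c).filter (fun t => ¬ m ∣ t), f t
      = ∏ t ∈ Finset.Ico a c, (if m ∣ t then 1 else f t) := by
  rw [Finset.prod_filter]
  exact Finset.prod_congr rfl (fun t _ => by by_cases h : m ∣ t <;> simp [h])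

lemma theta_idx {n : ℕ} (m k : ℕ) (hk : k ≠ 0) (x : Fin n → ZMod 2) (i : Fin n) (s : ℕ) :
    theta n m k x (idx i s) = Tt m (fun t => x (idx i t)) k s := by
  rw [theta, if_neg hk, Tt]
  congr 1
  · rw [idx_idx]
  · rw [prod_filter_ite (fun j => x (idx (idx i s) j) + 1)]
    exact Finset.prod_congr rfl (fun t _ => by rw [idx_idx])

lemma g_apply {n : ℕ} (m : ℕ) (S : Finset ℕ) (b : ℕ → ZMod 2) (x : Fin n → ZMod 2)
    (i : Fin n) :
    (theta n m 0 + ∑ k ∈ S, b k • theta n m k) x i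
      = x i + ∑ k ∈ S, b k * theta n m k x i := by
  have h0 : theta n m 0 = id := by rw [theta, if_pos rfl]
  rw [Pi.add_apply, Pi.add_apply, Finset.sum_apply, Finset.sum_apply, h0]
  simp only [id_eq, Pi.smul_apply, smul_eq_mul]

lemma idx_zero {n : ℕ} (i : Fin n) : idx i 0 = i := by
  unfold idx; ext; show (i.val + 0) % n = i.val
  rw [Nat.add_zero, Nat.mod_eq_of_lt i.isLt]

/-- abbreviation for shifted coordinates -/
def X' {n : ℕ} (x : Fin n → ZMod 2) (i : Fin n) : ℕ → ZMod 2 := fun t => x (idx i t)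

lemma core_point {n : ℕ} (m j : ℕ) (hm : 1 ≤ m) (hj : 1 ≤ j) (S : Finset ℕ)
    (hS : ∀ k ∈ S, 1 ≤ k) (b : ℕ → ZMod 2) (x : Fin n → ZMod 2) (i : Fin n) :
    theta n m j ((theta n m 0 + ∑ k ∈ S, b k • theta n m k) x) i
      = theta n m j x i + ∑ k ∈ S, b k * theta n m (j + k) x i := by
  set X := X' x i with hX
  set y := (theta n m 0 + ∑ k ∈ S, b k • theta n m k) x with hy
  have hyv : ∀ s, y (idx i s) = Yy m X S b s := by
    intro s
    rw [hy, g_apply, Yy]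
    congr 1
    refine Finset.sum_congr rfl (fun k hk => ?_)
    rw [theta_idx m k (by have := hS k hk; omega) x i s]
    rfl
  have hj0 : j ≠ 0 := by omega
  have hLHS : theta n m j y i
      = Yy m X S b (m*j) * ∏ t ∈ Finset.Ico 1 (m*j), (if m ∣ t then 1 else Yy m X S b t + 1) := by
    rw [theta, if_neg hj0]
    have h1 : y (idx i (m*j)) = Yy m X S b (m*j) := hyv (m*j)
    rw [h1]
    congr 1
    rw [prod_filter_ite (fun t => y (idx i t) + 1)]
    exact Finset.prod_congr rfl (fun t _ => by rw [hyv t])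
  rw [hLHS, core_aux m X S b hm hS j (m*j - 1) 1
    (by
      have h0 : 0 < m*j := Nat.mul_pos (by omega) (by omega)
      omega) le_rfl]
  have hTh : ∀ k, k ≠ 0 → theta n m k x i = X (m*k) * Ee m X 1 (m*k) := by
    intro k hk
    rw [theta, if_neg hk, Ee]
    congr 1
    rw [prod_filter_ite (fun t => x (idx i t) + 1)]
    rfl
  rw [hTh j hj0]
  congr 1
  refine Finset.sum_congr rfl (fun k hk => ?_)
  rw [hTh (j+k) (by have := hS k hk; omega)]
  rw [Nat.mul_add]

lemma core_map {n : ℕ} (m j : ℕ) (hm : 1 ≤ m) (hj : 1 ≤ j) (S : Finset ℕ)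
    (hS : ∀ k ∈ S, 1 ≤ k) (b : ℕ → ZMod 2) :
    theta n m j ∘ (theta n m 0 + ∑ k ∈ S, b k • theta n m k)
      = theta n m j + ∑ k ∈ S, b k • theta n m (j + k) := by
  funext x i
  rw [Function.comp_apply, core_point m j hm hj S hS b x i]
  simp only [Pi.add_apply, Finset.sum_apply, Pi.smul_apply, smul_eq_mul]

/-- Vanishing: `θ_k = 0` for `k > n/m` (this is where `m ∤ n` is used). -/
lemma theta_eq_zero {n m : ℕ} (hn : 1 ≤ n) (hm : 1 ≤ m) (hmn : ¬ m ∣ n) {k : ℕ}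
    (hk : n / m < k) : theta n m k = 0 := by
  have hk0 : k ≠ 0 := by rintro rfl; exact Nat.not_lt_zero _ hk
  have hnk : n < m * k := by
    have h := (Nat.div_lt_iff_lt_mul (by omega : 0 < m)).mp hk
    rw [Nat.mul_comm] at h
    exact h
  funext x i
  rw [theta, if_neg hk0]
  set p0 := m * k - n with hp0
  have hmem : p0 ∈ (Finset.Ico 1 (m*k)).filter (fun j => ¬ m ∣ j) := by
    rw [Finset.mem_filter, Finset.mem_Ico]
    refine ⟨⟨by omega, by omega⟩, ?_⟩
    intro h
    have h2 : m ∣ m * k - p0 := Nat.dvd_sub (Dvd.intro k rfl) h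
    have h3 : m * k - p0 = n := by omega
    exact hmn (h3 ▸ h2)
  rw [← Finset.mul_prod_erase _ _ hmem]
  have hidx : idx i p0 = idx i (m * k) := by
    unfold idx; ext
    show (i.val + p0) % n = (i.val + m * k) % n
    have h4 : i.val + m * k = (i.val + p0) + n := by omega
    rw [h4, Nat.add_mod_right]
  rw [hidx]
  have key : x (idx i (m*k)) * (x (idx i (m*k)) + 1) = 0 := zmod2_mul_add_one _
  show x (idx i (m * k)) * ((x (idx i (m*k)) + 1) * _) = 0
  rw [← mul_assoc, key, zero_mul]


/-! ### The algebraic layer -/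

def form (n m : ℕ) (a : ℕ → ZMod 2) : (Fin n → ZMod 2) → Fin n → ZMod 2 :=
  theta n m 0 + ∑ k ∈ Finset.Icc 1 (n / m), a k • theta n m k

lemma mem_Gset {n m : ℕ} {F : (Fin n → ZMod 2) → Fin n → ZMod 2} :
    F ∈ Gset n m ↔ ∃ a : ℕ → ZMod 2, F = form n m a := Iff.rfl

def evec (n m k0 : ℕ) : Fin n → ZMod 2 := fun t => if t.val = m * k0 then 1 else 0

section Lindep

variable {n m : ℕ}

lemma ml_lt (hmn : ¬ m ∣ n) : m * (n / m) < n := by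
  rcases Nat.lt_or_ge (m * (n/m)) n with h | h
  · exact h
  · exfalso
    have h2 : m * (n / m) ≤ n := Nat.mul_div_le n m
    have h3 : m * (n/m) = n := le_antisymm h2 h
    exact hmn ⟨n/m, h3.symm⟩

lemma theta_evec (hn : 1 ≤ n) (hm : 1 ≤ m) (hmn : ¬ m ∣ n) {k k0 : ℕ}
    (hk : k ∈ Finset.Icc 1 (n/m)) (hk0 : k0 ∈ Finset.Icc 1 (n/m)) :
    theta n m k (evec n m k0) ⟨0, hn⟩ = if k = k0 then 1 else 0 := by
  rw [Finset.mem_Icc] at hk hk0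
  have hml := ml_lt hmn
  have hidx : ∀ t, t < n → (idx (⟨0, hn⟩ : Fin n) t).val = t := by
    intro t ht
    show (0 + t) % n = t
    rw [Nat.zero_add, Nat.mod_eq_of_lt ht]
  have hmk : m * k < n := lt_of_le_of_lt (Nat.mul_le_mul_left m hk.2) hml
  rw [theta, if_neg (by omega : k ≠ 0)]
  have h1 : evec n m k0 (idx ⟨0, hn⟩ (m * k)) = if k = k0 then 1 else 0 := by
    rw [evec]
    simp only [hidx (m*k) hmk]
    by_cases h : k = k0
    · subst h; simp
    · rw [if_neg (fun hc => h (Nat.eq_of_mul_eq_mul_left (by omega) hc)), if_neg h]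
  have h2 : ∀ p ∈ (Finset.Ico 1 (m*k)).filter (fun j => ¬ m ∣ j),
      evec n m k0 (idx ⟨0, hn⟩ p) + 1 = 1 := by
    intro p hp
    rw [Finset.mem_filter, Finset.mem_Ico] at hp
    have hpn : p < n := by omega
    rw [evec]
    simp only [hidx p hpn]
    rw [if_neg (fun hc => hp.2 (by rw [hc]; exact Dvd.intro k0 rfl)), zero_add]
  rw [Finset.prod_congr rfl h2, Finset.prod_const_one, mul_one, h1]

lemma form_coef_eq (hn : 1 ≤ n) (hm : 1 ≤ m) (hmn : ¬ m ∣ n) {a a' : ℕ → ZMod 2}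
    (h : form n m a = form n m a') :
    ∀ k ∈ Finset.Icc 1 (n/m), a k = a' k := by
  intro k0 hk0
  have h1 := congrFun (congrFun h (evec n m k0)) ⟨0, hn⟩
  rw [form, form, g_apply, g_apply] at h1
  have key : ∀ c : ℕ → ZMod 2,
      ∑ k ∈ Finset.Icc 1 (n/m), c k * theta n m k (evec n m k0) ⟨0, hn⟩ = c k0 := by
    intro c
    rw [Finset.sum_congr rfl (fun k hk => by
      rw [theta_evec hn hm hmn hk hk0, mul_ite, mul_one, mul_zero])]
    rw [Finset.sum_ite_eq' (Finset.Icc 1 (n/m)) k0 c, if_pos hk0]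
  rw [key a, key a'] at h1
  exact add_left_cancel h1

end Lindep

/-- generic reshaping of double sums, in a commutative ring, when `w` vanishes above `l` -/
lemma reshape {A : Type*} [CommRing A] (l : ℕ) (w : ℕ → A) (hw : ∀ t, l < t → w t = 0)
    (α β : ℕ → A) :
    ∑ j ∈ Finset.Icc 1 l, ∑ k ∈ Finset.Icc 1 l, α j * β k * w (j + k)
      = ∑ t ∈ Finset.Icc 1 l, (∑ j ∈ Finset.Icc 1 (t-1), α j * β (t - j)) * w t := by
  rw [← Finset.sum_product' (Finset.Icc 1 l) (Finset.Icc 1 l)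
    (fun j k => α j * β k * w (j + k))]
  rw [← Finset.sum_filter_add_sum_filter_not (Finset.Icc 1 l ×ˢ Finset.Icc 1 l)
    (fun p => p.1 + p.2 ≤ l) (fun p => α p.1 * β p.2 * w (p.1 + p.2))]
  have h2 : ∑ p ∈ (Finset.Icc 1 l ×ˢ Finset.Icc 1 l).filter (fun p => ¬ p.1 + p.2 ≤ l),
      α p.1 * β p.2 * w (p.1 + p.2) = 0 := by
    refine Finset.sum_eq_zero (fun p hp => ?_)
    rw [Finset.mem_filter] at hp
    rw [hw _ (by omega), mul_zero]
  rw [h2, add_zero]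
  rw [Finset.sum_congr rfl (fun t _ => Finset.sum_mul (Finset.Icc 1 (t-1)) _ (w t)),
    Finset.sum_sigma' (Finset.Icc 1 l) (fun t => Finset.Icc 1 (t-1))
      (fun t j => α j * β (t - j) * w t)]
  refine Finset.sum_nbij' (fun p => ⟨p.1 + p.2, p.1⟩) (fun q => (q.2, q.1 - q.2))
    ?_ ?_ ?_ ?_ ?_
  · rintro ⟨p1, p2⟩ hp
    simp only [Finset.mem_filter, Finset.mem_product, Finset.mem_Icc] at hp
    obtain ⟨⟨⟨u1, u2⟩, u3, u4⟩, u5⟩ := hp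
    have u5' : p1 + p2 ≤ l := u5
    simp only [Finset.mem_sigma, Finset.mem_Icc]
    omega
  · rintro ⟨t, j⟩ hq
    simp only [Finset.mem_sigma, Finset.mem_Icc] at hq
    simp only [Finset.mem_filter, Finset.mem_product, Finset.mem_Icc]
    refine ⟨⟨⟨?_, ?_⟩, ?_, ?_⟩, ?_⟩ <;> omega
  · rintro ⟨p1, p2⟩ hp
    dsimp only
    simp only [Prod.mk.injEq]
    constructor
    · trivial
    · omega
  · rintro ⟨t, j⟩ hq
    simp only [Finset.mem_sigma, Finset.mem_Icc] at hq
    dsimp only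
    have ht : j + (t - j) = t := by omega
    rw [ht]
  · rintro ⟨p1, p2⟩ hp
    have : p1 + p2 - p1 = p2 := by omega
    dsimp only
    rw [this]


/-- coefficients of the truncated product -/
def cmul (a b : ℕ → ZMod 2) : ℕ → ZMod 2 :=
  fun t => a t + b t + ∑ j ∈ Finset.Icc 1 (t-1), a j * b (t - j)

lemma form_apply {n m : ℕ} (a : ℕ → ZMod 2) (x : Fin n → ZMod 2) (i : Fin n) :
    form n m a x i = x i + ∑ k ∈ Finset.Icc 1 (n/m), a k * theta n m k x i :=
  g_apply m (Finset.Icc 1 (n/m)) a x i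

lemma comp_form {n m : ℕ} (hn : 1 ≤ n) (hm : 1 ≤ m) (hmn : ¬ m ∣ n) (a b : ℕ → ZMod 2) :
    form n m a ∘ form n m b = form n m (cmul a b) := by
  funext x i
  rw [Function.comp_apply, form_apply a, form_apply b, form_apply (cmul a b)]
  have hS : ∀ k ∈ Finset.Icc 1 (n/m), 1 ≤ k := fun k hk => (Finset.mem_Icc.mp hk).1
  have hcp : ∀ j ∈ Finset.Icc 1 (n/m), theta n m j (form n m b x) i
      = theta n m j x i + ∑ k ∈ Finset.Icc 1 (n/m), b k * theta n m (j + k) x i :=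
    fun j hj => core_point m j hm (hS j hj) _ hS b x i
  have hw : ∀ t, n/m < t → theta n m t x i = 0 := by
    intro t ht
    rw [theta_eq_zero hn hm hmn ht]
    rfl
  have hre : ∑ j ∈ Finset.Icc 1 (n/m), ∑ k ∈ Finset.Icc 1 (n/m),
        a j * b k * theta n m (j+k) x i
      = ∑ t ∈ Finset.Icc 1 (n/m),
          (∑ j ∈ Finset.Icc 1 (t-1), a j * b (t - j)) * theta n m t x i :=
    reshape (n/m) (fun t => theta n m t x i) hw a b
  have h2 : ∑ k ∈ Finset.Icc 1 (n/m), a k * theta n m k (form n m b x) i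
      = ∑ j ∈ Finset.Icc 1 (n/m),
          a j * (theta n m j x i + ∑ k ∈ Finset.Icc 1 (n/m), b k * theta n m (j + k) x i) :=
    Finset.sum_congr rfl (fun j hj => by rw [hcp j hj])
  rw [h2]
  have h3 : ∀ j ∈ Finset.Icc 1 (n/m),
      a j * (theta n m j x i + ∑ k ∈ Finset.Icc 1 (n/m), b k * theta n m (j+k) x i)
        = a j * theta n m j x i
          + ∑ k ∈ Finset.Icc 1 (n/m), a j * b k * theta n m (j+k) x i := by
    intro j _
    rw [mul_add, Finset.mul_sum]
    congr 1
    exact Finset.sum_congr rfl (fun k _ => (mul_assoc _ _ _).symm)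
  have h3' : ∑ j ∈ Finset.Icc 1 (n/m),
      a j * (theta n m j x i + ∑ k ∈ Finset.Icc 1 (n/m), b k * theta n m (j + k) x i)
      = ∑ j ∈ Finset.Icc 1 (n/m), (a j * theta n m j x i
          + ∑ k ∈ Finset.Icc 1 (n/m), a j * b k * theta n m (j+k) x i) :=
    Finset.sum_congr rfl h3
  rw [h3', Finset.sum_add_distrib, hre]
  have h4 : ∀ t ∈ Finset.Icc 1 (n/m),
      cmul a b t * theta n m t x i
        = (a t * theta n m t x i + b t * theta n m t x i)
          + (∑ j ∈ Finset.Icc 1 (t-1), a j * b (t - j)) * theta n m t x i := by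
    intro t _
    rw [cmul]
    ring
  have h4' : ∑ t ∈ Finset.Icc 1 (n/m), cmul a b t * theta n m t x i
      = ∑ t ∈ Finset.Icc 1 (n/m), ((a t * theta n m t x i + b t * theta n m t x i)
          + (∑ j ∈ Finset.Icc 1 (t-1), a j * b (t - j)) * theta n m t x i) :=
    Finset.sum_congr rfl h4
  rw [h4', Finset.sum_add_distrib, Finset.sum_add_distrib]
  ring

lemma form_zero {n m : ℕ} : form n m (fun _ => 0) = id := by
  rw [form]
  have h1 : ∑ k ∈ Finset.Icc 1 (n/m), (0 : ZMod 2) • theta n m k = 0 := by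
    refine Finset.sum_eq_zero (fun k _ => ?_)
    exact zero_smul _ _
  rw [h1, add_zero, theta, if_pos rfl]

lemma id_mem_Gset {n m : ℕ} : id ∈ Gset n m := ⟨fun _ => 0, form_zero.symm⟩


/-! ### Polynomial side -/

open Polynomial in
noncomputable def Ppoly (l : ℕ) (a : ℕ → ZMod 2) : Polynomial (ZMod 2) :=
  1 + ∑ k ∈ Finset.Icc 1 l, Polynomial.C (a k) * Polynomial.X ^ k

noncomputable def Qq (l : ℕ) (a : ℕ → ZMod 2) :
    Polynomial (ZMod 2) ⧸ Ideal.span {(Polynomial.X : Polynomial (ZMod 2)) ^ (l + 1)} :=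
  Ideal.Quotient.mk _ (Ppoly l a)

open Polynomial

lemma Ppoly_coeff (l : ℕ) (a : ℕ → ZMod 2) (t : ℕ) :
    (Ppoly l a).coeff t
      = (if t = 0 then 1 else 0) + (if t ∈ Finset.Icc 1 l then a t else 0) := by
  rw [Ppoly, coeff_add, coeff_one, finset_sum_coeff]
  congr 1
  rw [Finset.sum_congr rfl (fun k _ => by
    rw [C_mul_X_pow_eq_monomial, coeff_monomial])]
  exact Finset.sum_ite_eq' (Finset.Icc 1 l) t a

lemma Ppoly_coeff_zero (l : ℕ) (a : ℕ → ZMod 2) : (Ppoly l a).coeff 0 = 1 := by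
  rw [Ppoly_coeff]
  simp

lemma Ppoly_coeff_mem (l : ℕ) (a : ℕ → ZMod 2) {t : ℕ} (ht : t ∈ Finset.Icc 1 l) :
    (Ppoly l a).coeff t = a t := by
  rw [Finset.mem_Icc] at ht
  rw [Ppoly_coeff, if_neg (by omega), if_pos (Finset.mem_Icc.mpr ht), zero_add]

lemma Ppoly_coeff_gt (l : ℕ) (a : ℕ → ZMod 2) {t : ℕ} (ht : l < t) :
    (Ppoly l a).coeff t = 0 := by
  rw [Ppoly_coeff, if_neg (by omega), if_neg (by rw [Finset.mem_Icc]; omega), zero_add]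

lemma Qq_congr {l : ℕ} {a a' : ℕ → ZMod 2} (h : ∀ k ∈ Finset.Icc 1 l, a k = a' k) :
    Qq l a = Qq l a' := by
  have hp : Ppoly l a = Ppoly l a' := by
    unfold Ppoly
    rw [Finset.sum_congr rfl (fun k hk => by rw [h k hk])]
  rw [Qq, Qq, hp]

lemma Qq_inj {l : ℕ} {a a' : ℕ → ZMod 2} (h : Qq l a = Qq l a') :
    ∀ k ∈ Finset.Icc 1 l, a k = a' k := by
  intro k hk
  have h1 : Polynomial.X ^ (l+1) ∣ (Ppoly l a - Ppoly l a') :=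
    Ideal.mem_span_singleton.mp (Ideal.Quotient.eq.mp h)
  have h2 := (Polynomial.X_pow_dvd_iff.mp h1) k (by rw [Finset.mem_Icc] at hk; omega)
  rw [coeff_sub, Ppoly_coeff_mem l a hk, Ppoly_coeff_mem l a' hk, sub_eq_zero] at h2
  exact h2

lemma zpow_zero' {l : ℕ} {t : ℕ} (ht : l < t) :
    (Ideal.Quotient.mk (Ideal.span {(Polynomial.X : Polynomial (ZMod 2)) ^ (l + 1)})
      Polynomial.X) ^ t = 0 := by
  rw [← map_pow, Ideal.Quotient.eq_zero_iff_mem]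
  exact Ideal.mem_span_singleton.mpr (pow_dvd_pow _ (by omega))

lemma Qq_expand (l : ℕ) (a : ℕ → ZMod 2) :
    Qq l a = 1 + ∑ k ∈ Finset.Icc 1 l,
      Ideal.Quotient.mk _ (Polynomial.C (a k))
        * (Ideal.Quotient.mk (Ideal.span {(Polynomial.X : Polynomial (ZMod 2)) ^ (l + 1)})
            Polynomial.X) ^ k := by
  rw [Qq, Ppoly, map_add, map_one, map_sum]
  exact congrArg (1 + ·) (Finset.sum_congr rfl (fun k _ => by rw [map_mul, map_pow]))

set_option maxHeartbeats 1000000 in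
lemma Qq_mul (l : ℕ) (a b : ℕ → ZMod 2) : Qq l (cmul a b) = Qq l a * Qq l b := by
  have hw : ∀ t, l < t →
      (Ideal.Quotient.mk (Ideal.span {(Polynomial.X : Polynomial (ZMod 2)) ^ (l + 1)})
        Polynomial.X) ^ t = 0 := fun t ht => zpow_zero' ht
  have hre := reshape l
    (fun t => (Ideal.Quotient.mk (Ideal.span {(Polynomial.X : Polynomial (ZMod 2)) ^ (l + 1)})
        Polynomial.X) ^ t) hw
    (fun j => Ideal.Quotient.mk _ (Polynomial.C (a j)))
    (fun j => Ideal.Quotient.mk _ (Polynomial.C (b j)))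
  rw [Qq_expand l a, Qq_expand l b, Qq_expand l (cmul a b)]
  set π := Ideal.Quotient.mk (Ideal.span {(Polynomial.X : Polynomial (ZMod 2)) ^ (l + 1)})
    with hπ
  have hAB : (∑ j ∈ Finset.Icc 1 l, π (Polynomial.C (a j)) * π Polynomial.X ^ j)
        * (∑ k ∈ Finset.Icc 1 l, π (Polynomial.C (b k)) * π Polynomial.X ^ k)
      = ∑ j ∈ Finset.Icc 1 l, ∑ k ∈ Finset.Icc 1 l,
          π (Polynomial.C (a j)) * π (Polynomial.C (b k)) * π Polynomial.X ^ (j + k) := by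
    rw [Finset.sum_mul]
    refine Finset.sum_congr rfl (fun j _ => ?_)
    rw [Finset.mul_sum]
    exact Finset.sum_congr rfl (fun k _ => by ring)
  have hL : (1 + ∑ j ∈ Finset.Icc 1 l, π (Polynomial.C (a j)) * π Polynomial.X ^ j)
        * (1 + ∑ k ∈ Finset.Icc 1 l, π (Polynomial.C (b k)) * π Polynomial.X ^ k)
      = 1 + (∑ j ∈ Finset.Icc 1 l, π (Polynomial.C (a j)) * π Polynomial.X ^ j
          + ∑ k ∈ Finset.Icc 1 l, π (Polynomial.C (b k)) * π Polynomial.X ^ k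
          + ∑ j ∈ Finset.Icc 1 l, ∑ k ∈ Finset.Icc 1 l,
              π (Polynomial.C (a j)) * π (Polynomial.C (b k)) * π Polynomial.X ^ (j + k)) := by
    rw [← hAB]
    ring
  rw [hL, hre]
  congr 1
  have hc : ∀ t ∈ Finset.Icc 1 l, π (Polynomial.C (cmul a b t)) * π Polynomial.X ^ t
      = π (Polynomial.C (a t)) * π Polynomial.X ^ t
        + π (Polynomial.C (b t)) * π Polynomial.X ^ t
        + (∑ j ∈ Finset.Icc 1 (t-1), π (Polynomial.C (a j)) * π (Polynomial.C (b (t - j))))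
            * π Polynomial.X ^ t := by
    intro t _
    have hC : π (Polynomial.C (cmul a b t))
        = π (Polynomial.C (a t)) + π (Polynomial.C (b t))
          + ∑ j ∈ Finset.Icc 1 (t-1), π (Polynomial.C (a j)) * π (Polynomial.C (b (t - j))) := by
      rw [cmul]
      simp only [map_add, map_sum, map_mul]
    rw [hC]
    ring
  rw [Finset.sum_congr rfl hc, Finset.sum_add_distrib, Finset.sum_add_distrib]


lemma Qq_isUnit (l : ℕ) (a : ℕ → ZMod 2) : IsUnit (Qq l a) := by
  set ν : Polynomial (ZMod 2) := ∑ k ∈ Finset.Icc 1 l, Polynomial.C (a k) * Polynomial.X ^ k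
    with hν
  have hXd : Polynomial.X ∣ ν := by
    refine Finset.dvd_sum (fun k hk => ?_)
    have hk1 : 1 ≤ k := (Finset.mem_Icc.mp hk).1
    exact dvd_mul_of_dvd_right (dvd_pow_self _ (by omega)) _
  have hnil : IsNilpotent (Ideal.Quotient.mk
      (Ideal.span {(Polynomial.X : Polynomial (ZMod 2)) ^ (l + 1)}) ν) := by
    refine ⟨l + 1, ?_⟩
    rw [← map_pow, Ideal.Quotient.eq_zero_iff_mem]
    exact Ideal.mem_span_singleton.mpr (pow_dvd_pow_of_dvd hXd _)
  have hq : Qq l a = 1 + Ideal.Quotient.mk _ ν := by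
    rw [Qq, Ppoly, map_add, map_one]
  rw [hq]
  exact hnil.isUnit_one_add

lemma quot_nontrivial (l : ℕ) :
    Nontrivial (Polynomial (ZMod 2) ⧸ Ideal.span {(Polynomial.X : Polynomial (ZMod 2)) ^ (l + 1)}) := by
  refine Ideal.Quotient.nontrivial_iff.mpr ?_
  rw [Ne, Ideal.span_singleton_eq_top]
  intro hU
  exact Polynomial.not_isUnit_X (isUnit_of_dvd_unit (dvd_pow_self _ (Nat.succ_ne_zero l)) hU)

lemma unit_rep (l : ℕ)
    {u : Polynomial (ZMod 2) ⧸ Ideal.span {(Polynomial.X : Polynomial (ZMod 2)) ^ (l + 1)}}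
    (hu : IsUnit u) : ∃ a : ℕ → ZMod 2, Qq l a = u := by
  obtain ⟨p, rfl⟩ := Ideal.Quotient.mk_surjective u
  have hq : (Polynomial.X ^ (l+1) : Polynomial (ZMod 2)).Monic := Polynomial.monic_X_pow _
  set r := p %ₘ (Polynomial.X ^ (l+1)) with hr
  have hrp : Ideal.Quotient.mk (Ideal.span {(Polynomial.X : Polynomial (ZMod 2)) ^ (l + 1)}) r
      = Ideal.Quotient.mk _ p := by
    rw [Ideal.Quotient.eq]
    have hmd := Polynomial.modByMonic_add_div p (Polynomial.X ^ (l+1))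
    have : r - p = -(Polynomial.X ^ (l+1) * (p /ₘ (Polynomial.X ^ (l+1)))) := by
      linear_combination hmd
    rw [this]
    exact neg_mem (Ideal.mem_span_singleton.mpr (dvd_mul_right _ _))
  have hdeg : r.degree < ((l+1 : ℕ) : WithBot ℕ) := by
    have := Polynomial.degree_modByMonic_lt p hq
    rwa [Polynomial.degree_X_pow] at this
  have hcgt : ∀ t, l < t → r.coeff t = 0 := by
    intro t ht
    refine Polynomial.coeff_eq_zero_of_degree_lt (lt_of_lt_of_le hdeg ?_)
    exact_mod_cast (by omega : l + 1 ≤ t)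
  have h0 : r.coeff 0 = 1 := by
    by_contra h
    have hz : ∀ v : ZMod 2, v ≠ 1 → v = 0 := by decide
    have h00 : r.coeff 0 = 0 := hz _ h
    obtain ⟨w, hw⟩ := Polynomial.X_dvd_iff.mpr h00
    have hunit : IsUnit (Ideal.Quotient.mk
        (Ideal.span {(Polynomial.X : Polynomial (ZMod 2)) ^ (l + 1)}) r) := hrp ▸ hu
    have hXunit : IsUnit (Ideal.Quotient.mk
        (Ideal.span {(Polynomial.X : Polynomial (ZMod 2)) ^ (l + 1)}) Polynomial.X) :=
      isUnit_of_dvd_unit ⟨Ideal.Quotient.mk _ w, by rw [hw, map_mul]⟩ hunit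
    have hXnil := zpow_zero' (l := l) (t := l+1) (by omega)
    have h01 : IsUnit (0 : Polynomial (ZMod 2) ⧸
        Ideal.span {(Polynomial.X : Polynomial (ZMod 2)) ^ (l + 1)}) := by
      rw [← hXnil]
      exact hXunit.pow _
    have := quot_nontrivial l
    exact zero_ne_one (isUnit_zero_iff.mp h01)
  refine ⟨fun k => r.coeff k, ?_⟩
  have hP : Ppoly l (fun k => r.coeff k) = r := by
    refine Polynomial.ext (fun t => ?_)
    by_cases ht0 : t = 0
    · subst ht0; rw [Ppoly_coeff_zero, h0]
    · by_cases htl : t ≤ l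
      · exact Ppoly_coeff_mem l _ (Finset.mem_Icc.mpr ⟨by omega, htl⟩)
      · rw [Ppoly_coeff_gt l _ (by omega : l < t), hcgt t (by omega)]
  rw [Qq, hP, hrp]

open Classical in
noncomputable def phi (n m : ℕ) : ((Fin n → ZMod 2) → Fin n → ZMod 2) →
    Polynomial (ZMod 2) ⧸ Ideal.span {(Polynomial.X : Polynomial (ZMod 2)) ^ (n / m + 1)} :=
  fun F => if h : F ∈ Gset n m then Qq (n/m) (Classical.choose h) else 1

lemma form_mem_Gset {n m : ℕ} (a : ℕ → ZMod 2) : form n m a ∈ Gset n m := ⟨a, rfl⟩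

lemma phi_form {n m : ℕ} (hn : 1 ≤ n) (hm : 1 ≤ m) (hmn : ¬ m ∣ n) (a : ℕ → ZMod 2) :
    phi n m (form n m a) = Qq (n/m) a := by
  have hmem : form n m a ∈ Gset n m := form_mem_Gset a
  have hspec : form n m a = form n m (Classical.choose hmem) := Classical.choose_spec hmem
  unfold phi
  rw [dif_pos hmem]
  exact Qq_congr (fun k hk => (form_coef_eq hn hm hmn hspec k hk).symm)

lemma form_congr {n m : ℕ} {a a' : ℕ → ZMod 2}
    (h : ∀ k ∈ Finset.Icc 1 (n/m), a k = a' k) : form n m a = form n m a' := by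
  have h1 : ∑ k ∈ Finset.Icc 1 (n/m), a k • theta n m k
      = ∑ k ∈ Finset.Icc 1 (n/m), a' k • theta n m k :=
    Finset.sum_congr rfl (fun k hk => by rw [h k hk])
  rw [form, form, h1]

lemma cmul_comm (a b : ℕ → ZMod 2) : cmul a b = cmul b a := by
  funext t
  rw [cmul, cmul]
  have hs : ∑ j ∈ Finset.Icc 1 (t-1), a j * b (t - j)
      = ∑ j ∈ Finset.Icc 1 (t-1), b j * a (t - j) := by
    refine Finset.sum_nbij' (fun j => t - j) (fun j => t - j) ?_ ?_ ?_ ?_ ?_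
    · intro j hj; simp only [Finset.mem_Icc] at *; omega
    · intro j hj; simp only [Finset.mem_Icc] at *; omega
    · intro j hj; simp only [Finset.mem_Icc] at hj; omega
    · intro j hj; simp only [Finset.mem_Icc] at hj; omega
    · intro j hj
      simp only [Finset.mem_Icc] at hj
      have h2 : t - (t - j) = j := by omega
      rw [h2]
      ring
  rw [hs]
  ring


lemma Qq_one (l : ℕ) : Qq l (fun _ => 0) = 1 := by
  have h : Ppoly l (fun _ => 0) = 1 := by
    rw [Ppoly]
    have : ∑ k ∈ Finset.Icc 1 l, Polynomial.C (0 : ZMod 2) * Polynomial.X ^ k = 0 := by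
      refine Finset.sum_eq_zero (fun k _ => ?_)
      rw [map_zero, zero_mul]
    rw [this, add_zero]
  rw [Qq, h, map_one]

end Stmt8Aux

open Stmt8Aux

theorem stmt8 (n m : ℕ) (hn : 1 ≤ n) (hm : 2 ≤ m) (hmn : ¬ m ∣ n) :
    (∀ f ∈ Gset n m, ∀ g ∈ Gset n m, f ∘ g ∈ Gset n m ∧ f ∘ g = g ∘ f) ∧
    (id ∈ Gset n m) ∧
    (∀ f ∈ Gset n m, ∃ g ∈ Gset n m, f ∘ g = id ∧ g ∘ f = id) ∧
    ∃ φ : ((Fin n → ZMod 2) → Fin n → ZMod 2) →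
        Polynomial (ZMod 2) ⧸
          Ideal.span {(Polynomial.X : Polynomial (ZMod 2)) ^ (n / m + 1)},
      (∀ a : ℕ → ZMod 2,
        φ (theta n m 0 + ∑ k ∈ Finset.Icc 1 (n / m), a k • theta n m k) =
          Ideal.Quotient.mk
            (Ideal.span {(Polynomial.X : Polynomial (ZMod 2)) ^ (n / m + 1)})
            (1 + ∑ k ∈ Finset.Icc 1 (n / m),
              Polynomial.C (a k) * Polynomial.X ^ k)) ∧
      (∀ f ∈ Gset n m, ∀ g ∈ Gset n m, φ (f ∘ g) = φ f * φ g) ∧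
      Set.BijOn φ (Gset n m) {u | IsUnit u} := by
  have hm1 : 1 ≤ m := by omega
  refine ⟨?_, id_mem_Gset, ?_, ?_⟩
  · -- closure and commutativity
    intro f hf g hg
    obtain ⟨a, ha⟩ := hf
    obtain ⟨b, hb⟩ := hg
    have ha' : f = form n m a := ha
    have hb' : g = form n m b := hb
    subst ha' hb'
    constructor
    · exact ⟨cmul a b, comp_form hn hm1 hmn a b⟩
    · rw [comp_form hn hm1 hmn a b, comp_form hn hm1 hmn b a, cmul_comm]
  · -- inverses
    intro f hf
    obtain ⟨a, ha⟩ := hf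
    have ha' : f = form n m a := ha
    subst ha'
    have hu := Qq_isUnit (n/m) a
    obtain ⟨b, hb⟩ := unit_rep (n/m) (hu.unit⁻¹).isUnit
    have hone : Qq (n/m) (cmul a b) = Qq (n/m) (fun _ => 0) := by
      rw [Qq_mul, hb, Qq_one]
      exact hu.mul_val_inv
    have hinv : form n m (cmul a b) = id := by
      rw [form_congr (Qq_inj hone), form_zero]
    refine ⟨form n m b, form_mem_Gset b, ?_, ?_⟩
    · rw [comp_form hn hm1 hmn a b, hinv]
    · rw [comp_form hn hm1 hmn b a, cmul_comm, hinv]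
  · refine ⟨phi n m, ?_, ?_, ?_, ?_, ?_⟩
    · intro a
      exact phi_form hn hm1 hmn a
    · intro f hf g hg
      obtain ⟨a, ha⟩ := hf
      obtain ⟨b, hb⟩ := hg
      have ha' : f = form n m a := ha
      have hb' : g = form n m b := hb
      subst ha' hb'
      rw [comp_form hn hm1 hmn a b, phi_form hn hm1 hmn, phi_form hn hm1 hmn,
        phi_form hn hm1 hmn, Qq_mul]
    · -- MapsTo
      intro f hf
      obtain ⟨a, ha⟩ := hf
      have ha' : f = form n m a := ha
      subst ha'
      show IsUnit (phi n m (form n m a))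
      rw [phi_form hn hm1 hmn]
      exact Qq_isUnit (n/m) a
    · -- InjOn
      intro f hf g hg h
      obtain ⟨a, ha⟩ := hf
      obtain ⟨b, hb⟩ := hg
      have ha' : f = form n m a := ha
      have hb' : g = form n m b := hb
      subst ha' hb'
      rw [phi_form hn hm1 hmn, phi_form hn hm1 hmn] at h
      exact form_congr (Qq_inj h)
    · -- SurjOn
      intro u hu
      obtain ⟨a, ha⟩ := unit_rep (n/m) hu
      exact ⟨form n m a, form_mem_Gset a, by rw [phi_form hn hm1 hmn, ha]⟩
end

section
/- Let ℓ ≥ 1, let 1 ≤ j ≤ ℓ, let a_{j+1}, …, a_ℓ ∈ F_2, and let f = 1 + z^j + Σ_{i=j+1}^{ℓ} a_i z^i ∈ F_2[z] (so z^j is the non-constant term of lowest degree in f). Then the order of the unit [f] in the unit group (F_2[z]/(z^{ℓ+1}))^* equals 2^r, where r is the least nonnegative integer with 2^r · j ≥ ℓ + 1 (equivalently, r = ⌈log_2((ℓ+1)/j)⌉). -/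
open Polynomial

theorem stmt11 (ℓ j : ℕ) (hℓ : 1 ≤ ℓ) (hj1 : 1 ≤ j) (hj2 : j ≤ ℓ)
    (a : ℕ → ZMod 2) (r : ℕ)
    (hr : ℓ + 1 ≤ 2 ^ r * j) (hr' : ∀ r' : ℕ, r' < r → 2 ^ r' * j < ℓ + 1) :
    orderOf (Ideal.Quotient.mk
        (Ideal.span {(Polynomial.X : Polynomial (ZMod 2)) ^ (ℓ + 1)})
        (1 + Polynomial.X ^ j +
          ∑ i ∈ Finset.Icc (j + 1) ℓ, Polynomial.C (a i) * Polynomial.X ^ i)) = 2 ^ r := by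
  haveI : Fact (Nat.Prime 2) := ⟨Nat.prime_two⟩
  set I := Ideal.span {(X : Polynomial (ZMod 2)) ^ (ℓ + 1)} with hI
  set p : Polynomial (ZMod 2) :=
    X ^ j + ∑ i ∈ Finset.Icc (j + 1) ℓ, C (a i) * X ^ i with hp
  set u : Polynomial (ZMod 2) :=
    1 + ∑ i ∈ Finset.Icc (j + 1) ℓ, C (a i) * X ^ (i - j) with hu
  have hfac : p = X ^ j * u := by
    rw [hu, mul_add, mul_one, Finset.mul_sum, hp]
    congr 1
    refine Finset.sum_congr rfl fun i hi => ?_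
    have hij : j + 1 ≤ i := (Finset.mem_Icc.mp hi).1
    rw [mul_comm ((X : Polynomial (ZMod 2)) ^ j), mul_assoc, ← pow_add]
    congr 2
    omega
  have hu0 : Polynomial.constantCoeff u = 1 := by
    rw [hu, map_add, map_one, map_sum]
    have hz : ∀ i ∈ Finset.Icc (j + 1) ℓ,
        Polynomial.constantCoeff (C (a i) * X ^ (i - j)) = 0 := by
      intro i hi
      have hij : j + 1 ≤ i := (Finset.mem_Icc.mp hi).1
      rw [map_mul, map_pow]
      have : Polynomial.constantCoeff (X : Polynomial (ZMod 2)) = 0 :=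
        Polynomial.coeff_X_zero
      rw [this, zero_pow (by omega : i - j ≠ 0), mul_zero]
    rw [Finset.sum_eq_zero hz, add_zero]
  obtain ⟨n, rfl⟩ : ∃ n, r = n + 1 := by
    cases r with
    | zero => simp at hr; omega
    | succ n => exact ⟨n, rfl⟩
  have hf : (1 : Polynomial (ZMod 2)) + X ^ j +
      ∑ i ∈ Finset.Icc (j + 1) ℓ, C (a i) * X ^ i = 1 + p := by rw [hp]; ring
  have key : ∀ m : ℕ,
      (Ideal.Quotient.mk I (1 + X ^ j +
        ∑ i ∈ Finset.Icc (j + 1) ℓ, C (a i) * X ^ i)) ^ (2 ^ m) = 1 ↔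
      (X : Polynomial (ZMod 2)) ^ (ℓ + 1) ∣ p ^ (2 ^ m) := by
    intro m
    rw [hf, ← map_pow, add_pow_char_pow, one_pow, map_add, map_one,
      ← Ideal.mem_span_singleton (α := Polynomial (ZMod 2)), ← hI,
      ← Ideal.Quotient.eq_zero_iff_mem]
    constructor
    · intro h
      have := add_eq_left.mp h
      exact this
    · intro h
      rw [h, add_zero]
  -- nonvanishing at exponent 2^n
  have hle : 2 ^ n * j ≤ ℓ := by have := hr' n (Nat.lt_succ_self n); omega
  have h1 : (p ^ (2 ^ n)).coeff (2 ^ n * j) = 1 := by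
    rw [hfac, mul_pow, ← pow_mul, mul_comm ((X : Polynomial (ZMod 2)) ^ (j * 2 ^ n)),
      show 2 ^ n * j = 0 + j * 2 ^ n by ring, Polynomial.coeff_mul_X_pow]
    have : (u ^ 2 ^ n).coeff 0 = Polynomial.constantCoeff (u ^ 2 ^ n) := rfl
    rw [this, map_pow, hu0, one_pow]
  have hnot : ¬ (Ideal.Quotient.mk I (1 + X ^ j +
      ∑ i ∈ Finset.Icc (j + 1) ℓ, C (a i) * X ^ i)) ^ (2 ^ n) = 1 := by
    rw [key n]
    rintro ⟨q, hq⟩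
    have h2 : (p ^ (2 ^ n)).coeff (2 ^ n * j) = 0 := by
      rw [hq, mul_comm, Polynomial.coeff_mul_X_pow', if_neg (by omega)]
    rw [h1] at h2
    exact one_ne_zero h2
  have hfin : (Ideal.Quotient.mk I (1 + X ^ j +
      ∑ i ∈ Finset.Icc (j + 1) ℓ, C (a i) * X ^ i)) ^ (2 ^ (n + 1)) = 1 := by
    rw [key (n + 1)]
    have h3 : (X : Polynomial (ZMod 2)) ^ (ℓ + 1) ∣ X ^ (j * 2 ^ (n + 1)) :=
      pow_dvd_pow X (by rw [mul_comm]; exact hr)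
    have h4 : (X : Polynomial (ZMod 2)) ^ (j * 2 ^ (n + 1)) ∣ p ^ (2 ^ (n + 1)) := by
      rw [hfac, mul_pow, ← pow_mul]
      exact Dvd.intro _ rfl
    exact h3.trans h4
  exact orderOf_eq_prime_pow hnot hfin
end

section
/- Let 1 ≤ k ≤ ℓ and let f = θ_{m,0} + θ_{m,k}. Then the order of f under composition equals 2^r, where r is the least nonnegative integer with 2^r · k ≥ ℓ + 1 (equivalently, r = ⌈log_2((ℓ+1)/k)⌉): the 2^r-fold iterate of f is the identity map of F_2^n, while for r ≥ 1 the 2^{r−1}-fold iterate of f is not the identity map. -/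
namespace Stmt12Aux

lemma zmod2_cases : ∀ a : ZMod 2, a = 0 ∨ a = 1 := by decide

lemma zmod2_mul_succ : ∀ a : ZMod 2, a * (a + 1) = 0 := by decide

lemma zmod2_add_self : ∀ a : ZMod 2, a + a = 0 := by decide

lemma idx_idx {n : ℕ} (i : Fin n) (a b : ℕ) : idx (idx i a) b = idx i (a + b) := by
  unfold idx
  ext
  simp only []
  rw [Nat.mod_add_mod, Nat.add_assoc]

lemma idx_zero {n : ℕ} (i : Fin n) : idx i 0 = i := by
  unfold idx
  ext
  simp [Nat.mod_eq_of_lt i.isLt]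

lemma theta_apply (n m k : ℕ) (hk : k ≠ 0) (x : Fin n → ZMod 2) (i : Fin n) :
    theta n m k x i = x (idx i (m * k)) *
      ∏ j ∈ (Finset.Ico 1 (m * k)).filter (fun j => ¬ m ∣ j), (x (idx i j) + 1) := by
  simp only [theta, if_neg hk]

lemma theta_zero_apply (n m : ℕ) (x : Fin n → ZMod 2) : theta n m 0 x = x := rfl

/-- The index set of the product in `theta`. -/
def Sset (m k : ℕ) : Finset ℕ := (Finset.Ico 1 (m * k)).filter (fun j => ¬ m ∣ j)

/-- Shifted product. -/
def Pp (m k : ℕ) (c : ℕ → ZMod 2) (t : ℕ) : ZMod 2 := ∏ j ∈ Sset m k, (c (t + j) + 1)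

lemma prod_split (m k : ℕ) (hm : m ≠ 0) (hk : k ≠ 0) (g : ℕ → ZMod 2) :
    ∏ j ∈ (Finset.Ico 1 (m * (2 * k))).filter (fun j => ¬ m ∣ j), g j
      = (∏ j ∈ Sset m k, g j) * ∏ j ∈ Sset m k, g (m * k + j) := by
  have h1 : 1 ≤ m * k := Nat.one_le_iff_ne_zero.mpr (Nat.mul_ne_zero hm hk)
  have h2 : m * (2 * k) = m * k + m * k := by ring
  rw [h2, ← Finset.Ico_union_Ico_eq_Ico h1 (Nat.le_add_right _ _), Finset.filter_union,
    Finset.prod_union (Finset.disjoint_filter_filter (Finset.Ico_disjoint_Ico_consecutive 1 (m * k) (m * k + m * k)))]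
  congr 1
  refine Finset.prod_nbij' (fun j => j - m * k) (fun j => m * k + j) ?_ ?_ ?_ ?_ ?_
  · intro a ha
    simp only [Finset.mem_filter, Finset.mem_Ico] at ha
    obtain ⟨⟨ha1, ha2⟩, ha3⟩ := ha
    have hane : a ≠ m * k := by
      rintro rfl; exact ha3 (dvd_mul_right m k)
    simp only [Sset, Finset.mem_filter, Finset.mem_Ico]
    refine ⟨⟨by omega, by omega⟩, ?_⟩
    intro hd
    apply ha3
    have := Nat.dvd_add hd (dvd_mul_right m k)
    rwa [Nat.sub_add_cancel ha1] at this
  · intro b hb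
    simp only [Sset, Finset.mem_filter, Finset.mem_Ico] at hb
    obtain ⟨⟨hb1, hb2⟩, hb3⟩ := hb
    simp only [Finset.mem_filter, Finset.mem_Ico]
    refine ⟨⟨by omega, by omega⟩, ?_⟩
    intro hd
    exact hb3 ((Nat.dvd_add_right (dvd_mul_right m k)).mp hd)
  · intro a ha
    simp only [Finset.mem_filter, Finset.mem_Ico] at ha
    omega
  · intro b hb
    simp only [Sset, Finset.mem_filter, Finset.mem_Ico] at hb
    omega
  · intro a ha
    simp only [Finset.mem_filter, Finset.mem_Ico] at ha
    congr 1
    omega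

lemma key_core (m k : ℕ) (c : ℕ → ZMod 2) :
    (c (m * k) + c (m * k + m * k) * Pp m k c (m * k))
      * ∏ j ∈ Sset m k, (c j + c (j + m * k) * Pp m k c j + 1)
    = c (m * k) * (∏ j ∈ Sset m k, (c j + 1))
      + c (m * k + m * k) * ((∏ j ∈ Sset m k, (c j + 1)) * Pp m k c (m * k)) := by
  set A := c (m * k) + c (m * k + m * k) * Pp m k c (m * k) with hA
  have hRHS : c (m * k) * (∏ j ∈ Sset m k, (c j + 1))
      + c (m * k + m * k) * ((∏ j ∈ Sset m k, (c j + 1)) * Pp m k c (m * k))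
      = A * ∏ j ∈ Sset m k, (c j + 1) := by rw [hA]; ring
  rw [hRHS]
  rcases zmod2_cases A with h | h
  · rw [h, zero_mul, zero_mul]
  · rw [h, one_mul, one_mul]
    refine Finset.prod_congr rfl fun j hj => ?_
    have hjS := hj
    simp only [Sset, Finset.mem_filter, Finset.mem_Ico] at hjS
    obtain ⟨⟨hj1, hj2⟩, hj3⟩ := hjS
    have hflip : c (j + m * k) * Pp m k c j = 0 := by
      rcases zmod2_cases (c (j + m * k)) with h1 | h1
      · rw [h1, zero_mul]
      · rcases zmod2_cases (Pp m k c j) with h2 | h2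
        · rw [h2, mul_zero]
        · exfalso
          have hall : ∀ j' ∈ Sset m k, c (j + j') = 0 := by
            intro j' hj'
            by_contra hne
            have h3 : c (j + j') = 1 := (zmod2_cases _).resolve_left hne
            have h4 : Pp m k c j = 0 := by
              refine Finset.prod_eq_zero hj' ?_
              rw [h3]; decide
            rw [h4] at h2
            exact (by decide : (0 : ZMod 2) ≠ 1) h2
          have hmem : m * k - j ∈ Sset m k := by
            simp only [Sset, Finset.mem_filter, Finset.mem_Ico]
            refine ⟨⟨by omega, by omega⟩, ?_⟩
            intro hd
            apply hj3
            have := Nat.dvd_sub (dvd_mul_right m k) hd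
            rwa [show m * k - (m * k - j) = j from by omega] at this
          have h0 : c (m * k) = 0 := by
            have := hall _ hmem
            rwa [show j + (m * k - j) = m * k from by omega] at this
          have hPmk : Pp m k c (m * k) = 0 := by
            refine Finset.prod_eq_zero hj ?_
            rw [show m * k + j = j + m * k from by omega, h1]; decide
          rw [hA, h0, hPmk, mul_zero, add_zero] at h
          exact (by decide : (0 : ZMod 2) ≠ 1) h
    rw [hflip, add_zero]

lemma key (n m k : ℕ) (hm : m ≠ 0) (hk : k ≠ 0) (x : Fin n → ZMod 2) (i : Fin n) :
    theta n m k (x + theta n m k x) i = theta n m k x i + theta n m (2 * k) x i := by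
  have h2k : 2 * k ≠ 0 := by omega
  obtain ⟨c, hc⟩ : ∃ c : ℕ → ZMod 2, ∀ t, x (idx i t) = c t :=
    ⟨fun s => x (idx i s), fun t => rfl⟩
  have hth : ∀ t : ℕ, theta n m k x (idx i t) = c (t + m * k) * Pp m k c t := by
    intro t
    rw [theta_apply n m k hk]
    simp only [idx_idx, hc, Pp, Sset]
  have hy : ∀ t : ℕ, (x + theta n m k x) (idx i t) = c t + c (t + m * k) * Pp m k c t := by
    intro t
    rw [Pi.add_apply, hth t, hc]
  have hthi : theta n m k x i = c (m * k) * ∏ j ∈ Sset m k, (c j + 1) := by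
    rw [theta_apply n m k hk]
    simp only [hc, Sset]
  have hth2 : theta n m (2 * k) x i
      = c (m * k + m * k) * ((∏ j ∈ Sset m k, (c j + 1)) * Pp m k c (m * k)) := by
    rw [theta_apply n m (2 * k) h2k]
    rw [prod_split m k hm hk (fun j => x (idx i j) + 1)]
    rw [show m * (2 * k) = m * k + m * k from by ring]
    simp only [hc, Pp, Sset]
  have hL : theta n m k (x + theta n m k x) i
      = (c (m * k) + c (m * k + m * k) * Pp m k c (m * k))
        * ∏ j ∈ Sset m k, (c j + c (j + m * k) * Pp m k c j + 1) := by
    rw [theta_apply n m k hk, hy (m * k)]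
    congr 1
    refine Finset.prod_congr rfl fun j hj => ?_
    rw [hy j]
  rw [hL, hthi, hth2]
  exact key_core m k c

lemma iter_pow (n m k : ℕ) (hm : m ≠ 0) (hk : k ≠ 0) (s : ℕ) :
    (theta n m 0 + theta n m k)^[2 ^ s] = fun x => x + theta n m (2 ^ s * k) x := by
  induction s with
  | zero =>
    rw [pow_zero, Function.iterate_one]
    funext x
    rw [Nat.one_mul k, Pi.add_apply, theta_zero_apply]
  | succ s ih =>
    have hK : 2 ^ s * k ≠ 0 := Nat.mul_ne_zero (Nat.two_pow_pos s).ne' hk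
    rw [pow_succ, Function.iterate_mul, ih]
    funext x
    have h2 : (fun y => y + theta n m (2 ^ s * k) y)^[2] x
        = (fun y => y + theta n m (2 ^ s * k) y) ((fun y => y + theta n m (2 ^ s * k) y) x) := rfl
    rw [h2]
    funext i
    simp only [Pi.add_apply]
    rw [key n m (2 ^ s * k) hm hK x i,
      show 2 ^ s * 2 * k = 2 * (2 ^ s * k) from by ring]
    linear_combination zmod2_add_self (theta n m (2 ^ s * k) x i)

lemma theta_vanish (n m K : ℕ) (hn : 1 ≤ n) (hmn : ¬ m ∣ n) (hK : n < m * K)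
    (x : Fin n → ZMod 2) (i : Fin n) : theta n m K x i = 0 := by
  have hK0 : K ≠ 0 := by rintro rfl; omega
  rw [theta_apply n m K hK0]
  have hj0 : m * K - n ∈ (Finset.Ico 1 (m * K)).filter (fun j => ¬ m ∣ j) := by
    simp only [Finset.mem_filter, Finset.mem_Ico]
    refine ⟨⟨by omega, by omega⟩, ?_⟩
    intro hd
    apply hmn
    have := Nat.dvd_sub (dvd_mul_right m K) hd
    rwa [show m * K - (m * K - n) = n from by omega] at this
  have hidx : idx i (m * K - n) = idx i (m * K) := by
    unfold idx
    ext
    simp only []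
    rw [show i.val + m * K = (i.val + (m * K - n)) + n from by omega, Nat.add_mod_right]
  rw [← Finset.mul_prod_erase _ _ hj0, hidx, ← mul_assoc, zmod2_mul_succ, zero_mul]

end Stmt12Aux

open Stmt12Aux in
theorem stmt12 (n m k : ℕ) (hn : 1 ≤ n) (hm : 2 ≤ m) (hmn : ¬ m ∣ n)
    (hk1 : 1 ≤ k) (hk2 : k ≤ n / m) (r : ℕ)
    (hr : n / m + 1 ≤ 2 ^ r * k) (hr' : ∀ r' : ℕ, r' < r → 2 ^ r' * k < n / m + 1) :
    ((theta n m 0 + theta n m k)^[2 ^ r] = id) ∧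
    (1 ≤ r → (theta n m 0 + theta n m k)^[2 ^ (r - 1)] ≠ id) ∧
    IsLeast {d : ℕ | 0 < d ∧ (theta n m 0 + theta n m k)^[d] = id} (2 ^ r) := by
  have hm0 : m ≠ 0 := by omega
  have hk0 : k ≠ 0 := by omega
  -- Part 1 : the 2^r-th iterate is the identity
  have part1 : (theta n m 0 + theta n m k)^[2 ^ r] = id := by
    rw [iter_pow n m k hm0 hk0 r]
    funext x
    have hv : n < m * (2 ^ r * k) := by
      rw [mul_comm]
      exact (Nat.div_lt_iff_lt_mul (by omega : 0 < m)).mp (by omega)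
    funext i
    rw [Pi.add_apply, theta_vanish n m (2 ^ r * k) hn hmn hv x i, add_zero]
    rfl
  -- Part 2 : the 2^(r-1)-th iterate is not the identity
  have part2 : 1 ≤ r → (theta n m 0 + theta n m k)^[2 ^ (r - 1)] ≠ id := by
    intro hr1 h
    rw [iter_pow n m k hm0 hk0 (r - 1)] at h
    set K := 2 ^ (r - 1) * k with hKdef
    have hKle : K ≤ n / m := by
      have := hr' (r - 1) (by omega)
      omega
    have hK1 : 1 ≤ K :=
      Nat.one_le_iff_ne_zero.mpr (Nat.mul_ne_zero (Nat.two_pow_pos (r - 1)).ne' hk0)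
    have hmKlt : m * K < n := by
      have h1 : m * K ≤ m * (n / m) := Nat.mul_le_mul_left m hKle
      have h2 : m * (n / m) ≤ n := Nat.mul_div_le n m
      have h3 : m * (n / m) ≠ n := by
        intro he
        exact hmn ⟨n / m, he.symm⟩
      omega
    -- witness
    set i0 : Fin n := ⟨0, hn⟩ with hi0
    set p : Fin n := ⟨m * K, hmKlt⟩ with hp
    set x : Fin n → ZMod 2 := fun t => if t = p then 1 else 0 with hx
    have hidx0 : ∀ t : ℕ, (ht : t < n) → idx i0 t = ⟨t, ht⟩ := by
      intro t ht
      unfold idx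
      ext
      simp [hi0, Nat.mod_eq_of_lt ht]
    have hKne : K ≠ 0 := by omega
    have hth : theta n m K x i0 = 1 := by
      rw [theta_apply n m K hKne]
      have h1 : x (idx i0 (m * K)) = 1 := by
        rw [hidx0 (m * K) hmKlt]
        simp [hx, hp]
      rw [h1, one_mul]
      refine Finset.prod_eq_one ?_
      intro j hj
      simp only [Finset.mem_filter, Finset.mem_Ico] at hj
      obtain ⟨⟨hj1, hj2⟩, _⟩ := hj
      have hjn : j < n := by omega
      rw [hidx0 j hjn]
      have hne : (⟨j, hjn⟩ : Fin n) ≠ p := by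
        rw [hp]
        intro he
        have := Fin.mk.injEq j hjn (m * K) hmKlt ▸ he
        simp only [Fin.mk.injEq] at he
        omega
      rw [hx]
      simp only [if_neg hne]
      norm_num
    have hxi0 : x i0 = 0 := by
      rw [hx]
      have hMK0 : m * K ≠ 0 := Nat.mul_ne_zero (by omega) (by omega)
      have : i0 ≠ p := by
        rw [hi0, hp]
        intro he
        simp only [Fin.mk.injEq] at he
        omega
      simp [this]
    have := congrFun (congrFun h x) i0
    rw [Pi.add_apply, hth, hxi0, id] at this
    rw [hxi0] at this
    exact (by decide : (0 : ZMod 2) + 1 ≠ 0) this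
  refine ⟨part1, part2, ⟨Nat.two_pow_pos r, part1⟩, ?_⟩
  -- lower bound
  intro d hd
  obtain ⟨hd0, hdid⟩ := hd
  set F : Function.End (Fin n → ZMod 2) := (theta n m 0 + theta n m k) with hF
  have hpow : ∀ t : ℕ, (F ^ t : Function.End _) = (theta n m 0 + theta n m k)^[t] := by
    intro t
    induction t with
    | zero => rw [pow_zero, Function.iterate_zero]; rfl
    | succ t ih => rw [pow_succ, ih, Function.iterate_succ]; rfl
  have h1 : F ^ (2 ^ r) = 1 := by
    rw [hpow, part1]; rfl
  have horder : orderOf F ∣ 2 ^ r := orderOf_dvd_of_pow_eq_one h1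
  obtain ⟨s, hs, hseq⟩ := (Nat.dvd_prime_pow Nat.prime_two).mp horder
  have hsr : s = r := by
    by_contra hne
    have hslt : s < r := lt_of_le_of_ne hs hne
    have hr1 : 1 ≤ r := by omega
    have hdvd : orderOf F ∣ 2 ^ (r - 1) := by
      rw [hseq]
      exact pow_dvd_pow 2 (by omega)
    have h2 : F ^ (2 ^ (r - 1)) = 1 := orderOf_dvd_iff_pow_eq_one.mp hdvd
    apply part2 hr1
    rw [← hpow, h2]
    rfl
  have hFd : F ^ d = 1 := by rw [hpow, hdid]; rfl
  have : orderOf F ∣ d := orderOf_dvd_of_pow_eq_one hFd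
  rw [hseq, hsr] at this
  exact Nat.le_of_dvd hd0 this
end

section
/- Let 1 ≤ k ≤ ℓ, let s = ⌊ℓ/k⌋, and let f = θ_{m,0} + θ_{m,k}. Then the map g = θ_{m,0} + θ_{m,k} + θ_{m,2k} + ⋯ + θ_{m,sk} is the compositional inverse of f, i.e., f ∘ g = g ∘ f = id on F_2^n. -/
namespace Stmt13Aux

lemma z2 (z : ZMod 2) : z * (z + 1) = 0 := by revert z; decide

lemma idx_zero {n : ℕ} (i : Fin n) : idx i 0 = i := by
  apply Fin.ext
  simp [idx, Nat.mod_eq_of_lt i.isLt]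

lemma idx_idx {n : ℕ} (i : Fin n) (s t : ℕ) : idx (idx i s) t = idx i (s + t) := by
  apply Fin.ext
  simp only [idx]
  rw [Nat.mod_add_mod, Nat.add_assoc]

lemma idx_congr {n : ℕ} (i : Fin n) {s t : ℕ} (h : s % n = t % n) : idx i s = idx i t := by
  apply Fin.ext
  simp only [idx]
  rw [Nat.add_mod i.1 s, Nat.add_mod i.1 t, h]

/-- The index set of the product in `θ_{m,k}`. -/
def Sk (m k : ℕ) : Finset ℕ := (Finset.Ico 1 (m * k)).filter (fun j => ¬ m ∣ j)

/-- `x` at position `i + t` (mod `n`). -/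
def av {n : ℕ} (x : Fin n → ZMod 2) (i : Fin n) (t : ℕ) : ZMod 2 := x (idx i t)

/-- `θ_{m,k}(x)` at position `i + j` (mod `n`), written with base point `i`. -/
def B {n : ℕ} (m k : ℕ) (x : Fin n → ZMod 2) (i : Fin n) (j : ℕ) : ZMod 2 :=
  av x i (j + m * k) * ∏ u ∈ Sk m k, (av x i (j + u) + 1)

variable {n m k : ℕ} (x : Fin n → ZMod 2) (i : Fin n)

lemma theta_shift (hk : k ≠ 0) (t : ℕ) : theta n m k x (idx i t) = B m k x i t := by
  rw [theta, if_neg hk]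
  unfold B av Sk
  rw [idx_idx]
  congr 1
  apply Finset.prod_congr rfl
  intro j hj
  rw [idx_idx]

lemma theta_apply (hk : k ≠ 0) : theta n m k x i = B m k x i 0 := by
  have h := theta_shift (m := m) x i hk 0
  rwa [idx_zero] at h

lemma B_mul_av {u : ℕ} (hu : u ∈ Sk m k) (j : ℕ) :
    av x i (j + u) * B m k x i j = 0 := by
  unfold B
  rw [← Finset.mul_prod_erase _ _ hu]
  have h := z2 (av x i (j + u))
  linear_combination (av x i (j + m * k) *
    ∏ u' ∈ (Sk m k).erase u, (av x i (j + u') + 1)) * h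

lemma B_leading (j : ℕ) : (av x i (j + m * k) + 1) * B m k x i j = 0 := by
  unfold B
  have h := z2 (av x i (j + m * k))
  linear_combination (∏ u ∈ Sk m k, (av x i (j + u) + 1)) * h

lemma theta_vanish (hn : 1 ≤ n) (hmn : ¬ m ∣ n) (K : ℕ) (h : n < m * K) :
    theta n m K x i = 0 := by
  have hK : K ≠ 0 := by rintro rfl; omega
  rw [theta_apply x i hK]
  have hj₀ : m * K - n ∈ Sk m K := by
    simp only [Sk, Finset.mem_filter, Finset.mem_Ico]
    refine ⟨⟨by omega, by omega⟩, ?_⟩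
    intro hd
    exact hmn (by
      have h1 : m ∣ m * K := dvd_mul_right m K
      have := Nat.dvd_sub h1 hd
      rwa [show m * K - (m * K - n) = n by omega] at this)
  unfold B
  rw [← Finset.mul_prod_erase _ _ hj₀]
  have he : av x i (0 + m * K) = av x i (0 + (m * K - n)) := by
    unfold av
    exact congrArg x (idx_congr i (by
      rw [show 0 + m * K = 0 + (m * K - n) + n by omega, Nat.add_mod_right]))
  rw [he]
  have h2 := z2 (av x i (0 + (m * K - n)))
  linear_combination (∏ u ∈ (Sk m K).erase (m * K - n), (av x i (0 + u) + 1)) * h2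

lemma Sk_split (m a k : ℕ) :
    Sk m (a + k) = Sk m a ∪ (Sk m k).image (fun u => m * a + u) := by
  have hma := Nat.mul_add m a k
  ext v
  simp only [Sk, Finset.mem_union, Finset.mem_image, Finset.mem_filter, Finset.mem_Ico]
  constructor
  · rintro ⟨⟨h1, h2⟩, h3⟩
    by_cases hv : v < m * a
    · exact Or.inl ⟨⟨h1, hv⟩, h3⟩
    · right
      have hvne : v ≠ m * a := by rintro rfl; exact h3 (dvd_mul_right m a)
      refine ⟨v - m * a, ⟨⟨by omega, by omega⟩, ?_⟩, by omega⟩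
      intro hd
      apply h3
      have := Nat.dvd_add (dvd_mul_right m a) hd
      rwa [show m * a + (v - m * a) = v by omega] at this
  · rintro (⟨⟨h1, h2⟩, h3⟩ | ⟨u, ⟨⟨h1, h2⟩, h3⟩, rfl⟩)
    · exact ⟨⟨h1, by omega⟩, h3⟩
    · refine ⟨⟨by omega, by omega⟩, ?_⟩
      intro hd
      exact h3 ((Nat.dvd_add_right (dvd_mul_right m a)).mp hd)

lemma key (hk : k ≠ 0) {a : ℕ} (ha : a ≠ 0) :
    theta n m a (x + theta n m k x) i = theta n m a x i + theta n m (a + k) x i := by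
  have hak : a + k ≠ 0 := by omega
  have hy : ∀ t, av (x + theta n m k x) i t = av x i t + B m k x i t := by
    intro t
    show (x + theta n m k x) (idx i t) = _
    rw [Pi.add_apply, theta_shift x i hk t]
    rfl
  rw [theta_apply _ i ha, theta_apply x i ha, theta_apply x i hak]
  unfold B
  simp only [zero_add, hy]
  have hfac : ∀ u, av x i u + B m k x i u + 1 = B m k x i u + (av x i u + 1) := by
    intro u; ring
  rw [Finset.prod_congr rfl (fun u _ => hfac u), Finset.prod_add, Finset.mul_sum]
  rw [Finset.sum_eq_single_of_mem ∅ (Finset.empty_mem_powerset _)]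
  · -- the empty-set term equals θ_a + θ_{a+k}
    rw [Finset.prod_empty, one_mul, Finset.sdiff_empty, add_mul]
    congr 1
    -- B (m*a) * ∏_{Sk m a} A = av (m*(a+k)) * ∏_{Sk m (a+k)} A
    unfold B
    rw [mul_assoc]
    congr 1
    · exact congrArg (fun t => av x i t) (by ring)
    · rw [Sk_split m a k, Finset.prod_union, Finset.prod_image]
      · rw [mul_comm]
      · intro u _ u' _ h; beta_reduce at h; omega
      · rw [Finset.disjoint_left]
        intro v hv hv'
        simp only [Sk, Finset.mem_image, Finset.mem_filter, Finset.mem_Ico] at hv hv'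
        obtain ⟨u, ⟨⟨hu1, _⟩, _⟩, rfl⟩ := hv'
        omega
  · -- all other terms vanish
    intro T hT hTne
    have hTS : T ⊆ Sk m a := Finset.mem_powerset.mp hT
    have hTne' : T.Nonempty := Finset.nonempty_iff_ne_empty.mpr hTne
    set J := T.max' hTne' with hJ
    have hJT : J ∈ T := T.max'_mem hTne'
    have hJS := hTS hJT
    simp only [Sk, Finset.mem_filter, Finset.mem_Ico] at hJS
    obtain ⟨⟨hJ1, hJ2⟩, hJ3⟩ := hJS
    rw [← Finset.mul_prod_erase _ _ hJT]
    by_cases hc : J + m * k < m * a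
    · -- the factor A_{J+mk} is present in the complement product and kills B_J
      have hpS : J + m * k ∈ Sk m a \ T := by
        rw [Finset.mem_sdiff]
        constructor
        · simp only [Sk, Finset.mem_filter, Finset.mem_Ico]
          refine ⟨⟨by omega, hc⟩, ?_⟩
          intro hd
          exact hJ3 ((Nat.dvd_add_right (dvd_mul_right m k)).mp (by rwa [Nat.add_comm] at hd))
        · intro hpT
          have := Finset.le_max' T _ hpT
          have hm0 : m ≠ 0 := by rintro rfl; omega
          have hmk : 1 ≤ m * k := Nat.mul_pos (by omega) (by omega)
          omega
      rw [← Finset.mul_prod_erase _ _ hpS]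
      have h0 := B_leading (m := m) (k := k) x i J
      linear_combination ((av x i (m * a) + B m k x i (m * a)) *
        (∏ u ∈ T.erase J, B m k x i u) *
        (∏ u ∈ (Sk m a \ T).erase (J + m * k), (av x i u + 1))) * h0
    · -- top window: both a_{ma} and B_{ma} kill B_J
      have hne : J + m * k ≠ m * a := by
        intro h
        apply hJ3
        have := Nat.dvd_sub (dvd_mul_right m a) (dvd_mul_right m k)
        rwa [show m * a - m * k = J by omega] at this
      have hlt : m * a < J + m * k := by omega
      have hu : m * a - J ∈ Sk m k := by
        simp only [Sk, Finset.mem_filter, Finset.mem_Ico]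
        refine ⟨⟨by omega, by omega⟩, ?_⟩
        intro hd
        apply hJ3
        have := Nat.dvd_sub (dvd_mul_right m a) hd
        rwa [show m * a - (m * a - J) = J by omega] at this
      have hu' : J + m * k - m * a ∈ Sk m k := by
        simp only [Sk, Finset.mem_filter, Finset.mem_Ico]
        refine ⟨⟨by omega, by omega⟩, ?_⟩
        intro hd
        apply hJ3
        have h1 := Nat.dvd_add (dvd_mul_right m a) hd
        rw [show m * a + (J + m * k - m * a) = J + m * k by omega] at h1
        exact (Nat.dvd_add_right (dvd_mul_right m k)).mp (by rwa [Nat.add_comm] at h1)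
      have h1 := B_mul_av (m := m) x i hu J
      rw [show J + (m * a - J) = m * a by omega] at h1
      have h2 := B_mul_av (m := m) x i hu' (m * a)
      rw [show m * a + (J + m * k - m * a) = J + m * k by omega] at h2
      have hB : B m k x i J = av x i (J + m * k) * ∏ u ∈ Sk m k, (av x i (J + u) + 1) := rfl
      rw [hB] at h1 ⊢
      linear_combination ((∏ u ∈ T.erase J, B m k x i u) *
          (∏ u ∈ Sk m a \ T, (av x i u + 1))) * h1 +
        ((∏ u ∈ Sk m k, (av x i (J + u) + 1)) * (∏ u ∈ T.erase J, B m k x i u) *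
          (∏ u ∈ Sk m a \ T, (av x i u + 1))) * h2

lemma tele (f : ℕ → ZMod 2) :
    ∀ s, 1 ≤ s → ∑ t ∈ Finset.Icc 1 s, (f t + f (t + 1)) = f 1 + f (s + 1) := by
  intro s
  induction s with
  | zero => omega
  | succ s ih =>
    intro _
    by_cases h : 1 ≤ s
    · rw [Finset.sum_Icc_succ_top (by omega), ih h]
      have := CharTwo.add_self_eq_zero (f (s + 1))
      linear_combination this
    · have hs0 : s = 0 := by omega
      subst hs0
      simp

end Stmt13Aux

open Stmt13Aux in
theorem stmt13 (n m k : ℕ) (hn : 1 ≤ n) (hm : 2 ≤ m) (hmn : ¬ m ∣ n)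
    (hk1 : 1 ≤ k) (hk2 : k ≤ n / m) :
    ((theta n m 0 + theta n m k) ∘
        (theta n m 0 + ∑ t ∈ Finset.Icc 1 (n / m / k), theta n m (t * k)) = id) ∧
    ((theta n m 0 + ∑ t ∈ Finset.Icc 1 (n / m / k), theta n m (t * k)) ∘
        (theta n m 0 + theta n m k) = id) := by
  have hk0 : k ≠ 0 := by omega
  set s := n / m / k with hs
  have hs1 : 1 ≤ s := (Nat.one_le_div_iff (by omega)).mpr hk2
  have htheta0 : theta n m 0 = id := by rw [theta, if_pos rfl]
  have hvanish : ∀ (x : Fin n → ZMod 2) (i : Fin n), theta n m ((s + 1) * k) x i = 0 := by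
    intro x i
    apply theta_vanish x i hn hmn
    have hq : n / m < (s + 1) * k := by
      have := Nat.lt_succ_self s
      rw [hs] at this ⊢
      exact (Nat.div_lt_iff_lt_mul (by omega)).mp this
    calc n < m * (n / m + 1) := by
            have h1 := Nat.div_add_mod n m
            have h2 : n % m < m := Nat.mod_lt _ (by omega)
            have h3 : m * (n / m + 1) = m * (n / m) + m := by ring
            omega
      _ ≤ m * ((s + 1) * k) := Nat.mul_le_mul_left m (by omega)
  have hkey : ∀ x : Fin n → ZMod 2,
      (theta n m 0 + ∑ t ∈ Finset.Icc 1 s, theta n m (t * k))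
        ((theta n m 0 + theta n m k) x) = x := by
    intro x
    have hF : (theta n m 0 + theta n m k) x = x + theta n m k x := by
      rw [Pi.add_apply, htheta0]; rfl
    funext i
    rw [hF, Pi.add_apply, htheta0]
    simp only [id_eq, Finset.sum_apply, Pi.add_apply]
    have hterm : ∀ t ∈ Finset.Icc 1 s,
        theta n m (t * k) (x + theta n m k x) i
          = theta n m (t * k) x i + theta n m ((t + 1) * k) x i := by
      intro t ht
      rw [Finset.mem_Icc] at ht
      have htk : t * k ≠ 0 := Nat.mul_ne_zero (by omega) hk0
      rw [key x i hk0 htk, show t * k + k = (t + 1) * k by ring]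
    rw [Finset.sum_congr rfl hterm, tele (fun t => theta n m (t * k) x i) s hs1]
    simp only [one_mul, hvanish x i]
    have hx := CharTwo.add_self_eq_zero (theta n m k x i)
    linear_combination hx
  have hL : Function.LeftInverse
      (theta n m 0 + ∑ t ∈ Finset.Icc 1 s, theta n m (t * k))
      (theta n m 0 + theta n m k) := hkey
  have hFsurj : Function.Surjective (theta n m 0 + theta n m k) :=
    Finite.injective_iff_surjective.mp hL.injective
  constructor
  · funext y
    obtain ⟨x, rfl⟩ := hFsurj y
    simp only [Function.comp_apply, id_eq]
    rw [hkey x]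
  · funext x
    exact hkey x
end
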